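/- arXiv:1805.08433 — 7 statements merged into one kernel-verified Lean document; each statement's English description precedes it below -/
import Mathlib

section
/- The algebraic Godbillon–Vey cochain Ψ is a 3-cocycle of the Witt algebra W with values in the trivial module K (δ_3 Ψ = 0), and Ψ is not a 3-coboundary; hence Ψ defines a non-trivial class in H^3(W, K). -/
/-- `e : ℤ → W` is a basis of `W` realizing `W` as the Witt algebra over `K`:
the `e n` form a `K`-basis and `⁅e n, e m⁆ = (m - n) • e (n + m)`. -/
def IsWittAlgebra (K : Type*) {W : Type*} [Field K] [LieRing W] [LieAlgebra K W]
    (e : ℤ → W) : Prop :=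
  (∃ b : Module.Basis ℤ K W, ∀ n : ℤ, b n = e n) ∧
    ∀ n m : ℤ, ⁅e n, e m⁆ = (m - n) • e (n + m)

/-- The Chevalley–Eilenberg coboundary of a 2-cochain with values in the trivial module. -/
def lieD2 (K : Type*) {L : Type*} [Field K] [LieRing L] [LieAlgebra K L]
    (φ : AlternatingMap K L K (Fin 2)) (x₁ x₂ x₃ : L) : K :=
  φ ![⁅x₁, x₂⁆, x₃] - φ ![⁅x₁, x₃⁆, x₂] + φ ![⁅x₂, x₃⁆, x₁]

/-- A 3-cochain with values in the trivial module `K` is a cocycle: `δ₃ ψ = 0`. -/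
def IsLieCocycle3 (K : Type*) {L : Type*} [Field K] [LieRing L] [LieAlgebra K L]
    (ψ : AlternatingMap K L K (Fin 3)) : Prop :=
  ∀ x₁ x₂ x₃ x₄ : L,
    ψ ![⁅x₁, x₂⁆, x₃, x₄] - ψ ![⁅x₁, x₃⁆, x₂, x₄] + ψ ![⁅x₁, x₄⁆, x₂, x₃]
      + ψ ![⁅x₂, x₃⁆, x₁, x₄] - ψ ![⁅x₂, x₄⁆, x₁, x₃] + ψ ![⁅x₃, x₄⁆, x₁, x₂] = 0

/-- A 3-cochain with values in the trivial module `K` is a coboundary: `ψ = δ₂ φ`. -/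
def IsLieCoboundary3 (K : Type*) {L : Type*} [Field K] [LieRing L] [LieAlgebra K L]
    (ψ : AlternatingMap K L K (Fin 3)) : Prop :=
  ∃ φ : AlternatingMap K L K (Fin 2), ∀ x₁ x₂ x₃ : L,
    ψ ![x₁, x₂, x₃] = lieD2 K φ x₁ x₂ x₃

set_option linter.unusedSectionVars false

section Aux
variable {K W : Type*} [Field K] [LieRing W] [LieAlgebra K W]

private lemma vupd0 (a b c x : W) : Function.update ![a, b, c] 0 x = ![x, b, c] := by
  ext i; fin_cases i <;> simp

private lemma vupd1 (a b c x : W) : Function.update ![a, b, c] 1 x = ![a, x, c] := by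
  ext i; fin_cases i <;> simp

private lemma vupd2 (a b c x : W) : Function.update ![a, b, c] 2 x = ![a, b, x] := by
  ext i; fin_cases i <;> simp

variable (Ψ : AlternatingMap K W K (Fin 3))

private lemma m3_add0 (a a' b c : W) : Ψ ![a + a', b, c] = Ψ ![a, b, c] + Ψ ![a', b, c] := by
  simpa only [vupd0] using Ψ.map_update_add ![a, b, c] 0 a a'

private lemma m3_add1 (a b b' c : W) : Ψ ![a, b + b', c] = Ψ ![a, b, c] + Ψ ![a, b', c] := by
  simpa only [vupd1] using Ψ.map_update_add ![a, b, c] 1 b b'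

private lemma m3_add2 (a b c c' : W) : Ψ ![a, b, c + c'] = Ψ ![a, b, c] + Ψ ![a, b, c'] := by
  simpa only [vupd2] using Ψ.map_update_add ![a, b, c] 2 c c'

private lemma m3_smul0 (r : K) (a b c : W) : Ψ ![r • a, b, c] = r * Ψ ![a, b, c] := by
  simpa only [vupd0, smul_eq_mul] using Ψ.map_update_smul ![a, b, c] 0 r a

private lemma m3_smul1 (r : K) (a b c : W) : Ψ ![a, r • b, c] = r * Ψ ![a, b, c] := by
  simpa only [vupd1, smul_eq_mul] using Ψ.map_update_smul ![a, b, c] 1 r b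

private lemma m3_smul2 (r : K) (a b c : W) : Ψ ![a, b, r • c] = r * Ψ ![a, b, c] := by
  simpa only [vupd2, smul_eq_mul] using Ψ.map_update_smul ![a, b, c] 2 r c

private lemma m3_zsmul0 (z : ℤ) (a b c : W) : Ψ ![z • a, b, c] = (z : K) * Ψ ![a, b, c] := by
  rw [← Int.cast_smul_eq_zsmul K, m3_smul0]

end Aux

/-- the algebraic Godbillon–Vey cochain `Ψ` is a 3-cocycle of the Witt
algebra with values in the trivial module `K`, and it is not a 3-coboundary. -/
theorem godbillonVey_isCocycle_not_coboundary
    {K W : Type*} [Field K] [CharZero K] [LieRing W] [LieAlgebra K W]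
    (e : ℤ → W) (hW : IsWittAlgebra K e)
    (Ψ : AlternatingMap K W K (Fin 3))
    (hΨ : ∀ i j k : ℤ, Ψ ![e i, e j, e k] =
      if i + j + k = 0 then (((i - j) * (j - k) * (i - k) : ℤ) : K) else 0) :
    IsLieCocycle3 K Ψ ∧ ¬ IsLieCoboundary3 K Ψ := by
  obtain ⟨⟨b, hb⟩, hbr⟩ := hW
  constructor
  · -- cocycle
    set T : W → W → W → W → K := fun x₁ x₂ x₃ x₄ =>
      Ψ ![⁅x₁, x₂⁆, x₃, x₄] - Ψ ![⁅x₁, x₃⁆, x₂, x₄] + Ψ ![⁅x₁, x₄⁆, x₂, x₃]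
        + Ψ ![⁅x₂, x₃⁆, x₁, x₄] - Ψ ![⁅x₂, x₄⁆, x₁, x₃] + Ψ ![⁅x₃, x₄⁆, x₁, x₂] with hT
    have hspan : ∀ x : W, x ∈ Submodule.span K (Set.range e) := by
      intro x
      have : Set.range e = Set.range b := by
        ext y; constructor <;> rintro ⟨n, rfl⟩ <;> exact ⟨n, by rw [hb]⟩
      rw [this, b.span_eq]; trivial
    have h0a : ∀ (b c : W), Ψ ![(0:W), b, c] = 0 := fun b c => by
      simpa only [vupd0] using Ψ.map_update_zero ![0, b, c] 0
    have h0b : ∀ (a c : W), Ψ ![a, (0:W), c] = 0 := fun a c => by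
      simpa only [vupd1] using Ψ.map_update_zero ![a, 0, c] 1
    have h0c : ∀ (a b : W), Ψ ![a, b, (0:W)] = 0 := fun a b => by
      simpa only [vupd2] using Ψ.map_update_zero ![a, b, 0] 2
    have base : ∀ a₁ a₂ a₃ a₄ : ℤ, T (e a₁) (e a₂) (e a₃) (e a₄) = 0 := by
      intro a₁ a₂ a₃ a₄
      simp only [hT, hbr, m3_zsmul0, hΨ]
      by_cases hs : a₁ + a₂ + a₃ + a₄ = 0
      · have h12 : a₁ + a₂ + a₃ + a₄ = 0 := hs
        rw [if_pos (by omega), if_pos (by omega), if_pos (by omega), if_pos (by omega),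
          if_pos (by omega), if_pos (by omega)]
        have h4 : a₄ = -a₁ - a₂ - a₃ := by omega
        subst h4
        push_cast
        ring
      · rw [if_neg (by omega), if_neg (by omega), if_neg (by omega), if_neg (by omega),
          if_neg (by omega), if_neg (by omega)]
        ring
    intro x₁ x₂ x₃ x₄
    show T x₁ x₂ x₃ x₄ = 0
    induction hspan x₁ using Submodule.span_induction with
    | mem x hx =>
      obtain ⟨a₁, rfl⟩ := hx
      induction hspan x₂ using Submodule.span_induction with
      | mem y hy =>
        obtain ⟨a₂, rfl⟩ := hy
        induction hspan x₃ using Submodule.span_induction with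
        | mem z hz =>
          obtain ⟨a₃, rfl⟩ := hz
          induction hspan x₄ using Submodule.span_induction with
          | mem w hw => obtain ⟨a₄, rfl⟩ := hw; exact base a₁ a₂ a₃ a₄
          | zero => simp [hT, zero_lie, lie_zero, h0a, h0b, h0c]
          | add u v _ _ hu hv =>
            simp only [hT, lie_add, add_lie, m3_add0, m3_add1, m3_add2] at hu hv ⊢
            linear_combination hu + hv
          | smul r u _ hu =>
            simp only [hT, lie_smul, smul_lie, m3_smul0, m3_smul1, m3_smul2] at hu ⊢
            linear_combination r * hu
        | zero => simp [hT, zero_lie, lie_zero, h0a, h0b, h0c]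
        | add u v _ _ hu hv =>
          simp only [hT, lie_add, add_lie, m3_add0, m3_add1, m3_add2] at hu hv ⊢
          linear_combination hu + hv
        | smul r u _ hu =>
          simp only [hT, lie_smul, smul_lie, m3_smul0, m3_smul1, m3_smul2] at hu ⊢
          linear_combination r * hu
      | zero => simp [hT, zero_lie, lie_zero, h0a, h0b, h0c]
      | add u v _ _ hu hv =>
        simp only [hT, lie_add, add_lie, m3_add0, m3_add1, m3_add2] at hu hv ⊢
        linear_combination hu + hv
      | smul r u _ hu =>
        simp only [hT, lie_smul, smul_lie, m3_smul0, m3_smul1, m3_smul2] at hu ⊢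
        linear_combination r * hu
    | zero => simp [hT, zero_lie, lie_zero, h0a, h0b, h0c]
    | add u v _ _ hu hv =>
      simp only [hT, lie_add, add_lie, m3_add0, m3_add1, m3_add2] at hu hv ⊢
      linear_combination hu + hv
    | smul r u _ hu =>
      simp only [hT, lie_smul, smul_lie, m3_smul0, m3_smul1, m3_smul2] at hu ⊢
      linear_combination r * hu
  · -- not a coboundary
    rintro ⟨φ, hφ⟩
    have w0 : ∀ (a b x : W), Function.update ![a, b] 0 x = ![x, b] := by
      intro a b x; ext i; fin_cases i <;> simp
    have w1 : ∀ (a b x : W), Function.update ![a, b] 1 x = ![a, x] := by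
      intro a b x; ext i; fin_cases i <;> simp
    have hzs : ∀ (z : ℤ) (a c : W), φ ![z • a, c] = (z : K) * φ ![a, c] := by
      intro z a c
      rw [← Int.cast_smul_eq_zsmul K]
      simpa only [w0, smul_eq_mul] using φ.map_update_smul ![a, c] 0 ((z : K)) a
    have hanti : ∀ a c : W, φ ![c, a] = -φ ![a, c] := by
      intro a c
      have hzero2 : ∀ x : W, φ ![x, x] = 0 := fun x =>
        φ.map_eq_zero_of_eq ![x, x] (i := 0) (j := 1) (by simp) (by decide)
      have hadd0 : ∀ (x y z : W), φ ![x + y, z] = φ ![x, z] + φ ![y, z] := by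
        intro x y z; simpa only [w0] using φ.map_update_add ![x, z] 0 x y
      have hadd1 : ∀ (z x y : W), φ ![z, x + y] = φ ![z, x] + φ ![z, y] := by
        intro z x y; simpa only [w1] using φ.map_update_add ![z, x] 1 x y
      have h := hzero2 (a + c)
      rw [hadd0, hadd1, hadd1, hzero2, hzero2] at h
      linear_combination h
    have hA := hφ (e 2) (e 1) (e (-3))
    have hB := hφ (e 3) (e (-1)) (e (-2))
    rw [hΨ] at hA hB
    simp only [lieD2, hbr, hzs] at hA hB
    norm_num at hA hB
    have h1 := hanti (e 1) (e (-1))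
    have h2 := hanti (e 2) (e (-2))
    have h3 := hanti (e 3) (e (-3))
    have h40 : (40 : K) = 0 := by linear_combination hA + hB + 5 * h1 - 4 * h2 - h3
    norm_num at h40
end

section
/- The cochain Ψ̂ is a 3-cocycle of the Virasoro algebra V with values in the trivial module K (δ_3 Ψ̂ = 0), and Ψ̂ is not a 3-coboundary; hence Ψ̂ defines a non-trivial class in H^3(V, K). -/
set_option maxHeartbeats 1000000

section Helpers

variable {K V : Type*} [Field K] [LieRing V] [LieAlgebra K V]

private lemma upd3_0 (x y z c : V) : Function.update ![x, y, z] 0 c = ![c, y, z] := by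
  ext i; fin_cases i <;> simp [Function.update]

private lemma upd3_1 (x y z c : V) : Function.update ![x, y, z] 1 c = ![x, c, z] := by
  ext i; fin_cases i <;> simp [Function.update]

private lemma upd3_2 (x y z c : V) : Function.update ![x, y, z] 2 c = ![x, y, c] := by
  ext i; fin_cases i <;> simp [Function.update]

private lemma upd2_0 (x y c : V) : Function.update ![x, y] 0 c = ![c, y] := by
  ext i; fin_cases i <;> simp [Function.update]

private lemma A3add0 (f : AlternatingMap K V K (Fin 3)) (a b y z : V) :
    f ![a + b, y, z] = f ![a, y, z] + f ![b, y, z] := by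
  have h := f.map_update_add ![a, y, z] 0 a b
  rwa [upd3_0, upd3_0, upd3_0] at h

private lemma A3add1 (f : AlternatingMap K V K (Fin 3)) (a b x z : V) :
    f ![x, a + b, z] = f ![x, a, z] + f ![x, b, z] := by
  have h := f.map_update_add ![x, a, z] 1 a b
  rwa [upd3_1, upd3_1, upd3_1] at h

private lemma A3add2 (f : AlternatingMap K V K (Fin 3)) (a b x y : V) :
    f ![x, y, a + b] = f ![x, y, a] + f ![x, y, b] := by
  have h := f.map_update_add ![x, y, a] 2 a b
  rwa [upd3_2, upd3_2, upd3_2] at h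

private lemma A3smul0 (f : AlternatingMap K V K (Fin 3)) (c : K) (a y z : V) :
    f ![c • a, y, z] = c * f ![a, y, z] := by
  have h := f.map_update_smul ![a, y, z] 0 c a
  rw [upd3_0, upd3_0] at h; rw [h, smul_eq_mul]

private lemma A3smul1 (f : AlternatingMap K V K (Fin 3)) (c : K) (x a z : V) :
    f ![x, c • a, z] = c * f ![x, a, z] := by
  have h := f.map_update_smul ![x, a, z] 1 c a
  rw [upd3_1, upd3_1] at h; rw [h, smul_eq_mul]

private lemma A3smul2 (f : AlternatingMap K V K (Fin 3)) (c : K) (x y a : V) :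
    f ![x, y, c • a] = c * f ![x, y, a] := by
  have h := f.map_update_smul ![x, y, a] 2 c a
  rw [upd3_2, upd3_2] at h; rw [h, smul_eq_mul]

private lemma A3zsmul0 (f : AlternatingMap K V K (Fin 3)) (c : ℤ) (a y z : V) :
    f ![c • a, y, z] = (c : K) * f ![a, y, z] := by
  rw [← Int.cast_smul_eq_zsmul K, A3smul0]

private lemma A3zero0 (f : AlternatingMap K V K (Fin 3)) (y z : V) : f ![0, y, z] = 0 :=
  f.map_coord_zero 0 rfl

private lemma A2add0 (f : AlternatingMap K V K (Fin 2)) (a b y : V) :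
    f ![a + b, y] = f ![a, y] + f ![b, y] := by
  have h := f.map_update_add ![a, y] 0 a b
  rwa [upd2_0, upd2_0, upd2_0] at h

private lemma A2smul0 (f : AlternatingMap K V K (Fin 2)) (c : K) (a y : V) :
    f ![c • a, y] = c * f ![a, y] := by
  have h := f.map_update_smul ![a, y] 0 c a
  rw [upd2_0, upd2_0] at h; rw [h, smul_eq_mul]

private lemma A2zsmul0 (f : AlternatingMap K V K (Fin 2)) (c : ℤ) (a y : V) :
    f ![c • a, y] = (c : K) * f ![a, y] := by
  rw [← Int.cast_smul_eq_zsmul K, A2smul0]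

private lemma A2swap (f : AlternatingMap K V K (Fin 2)) (x y : V) : f ![x, y] = -f ![y, x] := by
  have h := f.map_swap (v := ![y, x]) (i := 0) (j := 1) (by decide)
  have e : (![y, x] ∘ Equiv.swap (0 : Fin 2) 1) = ![x, y] := by
    ext i; fin_cases i <;> simp [Equiv.swap_apply_def]
  rwa [e] at h

private lemma A3swap12 (f : AlternatingMap K V K (Fin 3)) (x y z : V) :
    f ![x, z, y] = -f ![x, y, z] := by
  have h := f.map_swap (v := ![x, y, z]) (i := 1) (j := 2) (by decide)
  have e : (![x, y, z] ∘ Equiv.swap (1 : Fin 3) 2) = ![x, z, y] := by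
    ext i; fin_cases i <;> simp [Equiv.swap_apply_def]
  rwa [e] at h

private lemma A3swap02 (f : AlternatingMap K V K (Fin 3)) (x y z : V) :
    f ![z, y, x] = -f ![x, y, z] := by
  have h := f.map_swap (v := ![x, y, z]) (i := 0) (j := 2) (by decide)
  have e : (![x, y, z] ∘ Equiv.swap (0 : Fin 3) 2) = ![z, y, x] := by
    ext i; fin_cases i <;> simp [Equiv.swap_apply_def]
  rwa [e] at h

private lemma upd4_0 (m : Fin 4 → V) (c : V) :
    Function.update m 0 c = ![c, m 1, m 2, m 3] := by
  ext i; fin_cases i <;> simp [Function.update]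

private lemma upd4_1 (m : Fin 4 → V) (c : V) :
    Function.update m 1 c = ![m 0, c, m 2, m 3] := by
  ext i; fin_cases i <;> simp [Function.update]

private lemma upd4_2 (m : Fin 4 → V) (c : V) :
    Function.update m 2 c = ![m 0, m 1, c, m 3] := by
  ext i; fin_cases i <;> simp [Function.update]

private lemma upd4_3 (m : Fin 4 → V) (c : V) :
    Function.update m 3 c = ![m 0, m 1, m 2, c] := by
  ext i; fin_cases i <;> simp [Function.update]

end Helpers

/-- `E : ℤ → V` together with the central element `t` realize `V` as the Virasoro
algebra over `K`: the `E n` together with `t` form a `K`-basis,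
`⁅E n, E m⁆ = (m - n) • E (n + m) - (1/12)(n³ - n) δ_{n+m,0} • t` and `⁅E n, t⁆ = 0`. -/
def IsVirasoroAlgebra (K : Type*) {V : Type*} [Field K] [LieRing V] [LieAlgebra K V]
    (E : ℤ → V) (t : V) : Prop :=
  (∃ b : Module.Basis (Option ℤ) K V, b none = t ∧ ∀ n : ℤ, b (some n) = E n) ∧
    (∀ n m : ℤ, ⁅E n, E m⁆ = (m - n) • E (n + m) +
      (if n + m = 0 then -((((n : K) ^ 3 - (n : K)) / 12)) else 0) • t) ∧
    ∀ n : ℤ, ⁅E n, t⁆ = 0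

/-- the cochain `Ψ̂` (the trivial extension of the algebraic Godbillon–Vey
cocycle) is a 3-cocycle of the Virasoro algebra with values in the trivial module `K`,
and it is not a 3-coboundary. -/
theorem virasoro_godbillonVey_isCocycle_not_coboundary
    {K V : Type*} [Field K] [CharZero K] [LieRing V] [LieAlgebra K V]
    (E : ℤ → V) (t : V) (hV : IsVirasoroAlgebra K E t)
    (Ψ : AlternatingMap K V K (Fin 3))
    (hΨ : ∀ i j k : ℤ, Ψ ![E i, E j, E k] =
      if i + j + k = 0 then (((i - j) * (j - k) * (i - k) : ℤ) : K) else 0)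
    (hΨt : ∀ x y : V, Ψ ![x, y, t] = 0) :
    IsLieCocycle3 K Ψ ∧ ¬ IsLieCoboundary3 K Ψ := by
  obtain ⟨⟨b, hbt, hbE⟩, hbrk, ht⟩ := hV
  -- t is central
  have hct : ∀ x : V, ⁅x, t⁆ = 0 := by
    let ℓ : V →ₗ[K] V :=
      { toFun := fun x => ⁅x, t⁆
        map_add' := fun x y => add_lie x y t
        map_smul' := fun c x => smul_lie c x t }
    have h0 : ℓ = 0 := b.ext fun i => by
      cases i with
      | none =>
        show ⁅b none, t⁆ = (0 : V →ₗ[K] V) (b none)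
        rw [hbt]; simp
      | some n =>
        show ⁅b (some n), t⁆ = (0 : V →ₗ[K] V) (b (some n))
        rw [hbE]; simp [ht n]
    intro x
    exact DFunLike.congr_fun h0 x
  have htc : ∀ x : V, ⁅t, x⁆ = 0 := fun x => by
    rw [← lie_skew, hct, neg_zero]
  have Ψt1 : ∀ x y : V, Ψ ![x, t, y] = 0 := fun x y => by
    rw [A3swap12, hΨt, neg_zero]
  have Ψt0 : ∀ x y : V, Ψ ![t, x, y] = 0 := fun x y => by
    rw [A3swap02 Ψ y x t, hΨt, neg_zero]
  -- bracket expansion inside Ψ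
  have hterm : ∀ a c d e : ℤ, Ψ ![⁅E a, E c⁆, E d, E e] =
      ((c - a : ℤ) : K) *
        (if a + c + d + e = 0 then (((a + c - d) * (d - e) * (a + c - e) : ℤ) : K) else 0) := by
    intro a c d e
    rw [hbrk a c, A3add0, A3zsmul0, A3smul0, Ψt0, mul_zero, add_zero, hΨ]
  -- the cocycle identity on basis quadruples of `E`s
  have key : ∀ a c d e : ℤ,
      Ψ ![⁅E a, E c⁆, E d, E e] - Ψ ![⁅E a, E d⁆, E c, E e] + Ψ ![⁅E a, E e⁆, E c, E d]
        + Ψ ![⁅E c, E d⁆, E a, E e] - Ψ ![⁅E c, E e⁆, E a, E d] + Ψ ![⁅E d, E e⁆, E a, E c]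
        = 0 := by
    intro a c d e
    rw [hterm a c d e, hterm a d c e, hterm a e c d, hterm c d a e, hterm c e a d,
      hterm d e a c]
    by_cases h : a + c + d + e = 0
    · have h2 : a + d + c + e = 0 := by omega
      have h3 : a + e + c + d = 0 := by omega
      have h4 : c + d + a + e = 0 := by omega
      have h5 : c + e + a + d = 0 := by omega
      have h6 : d + e + a + c = 0 := by omega
      rw [if_pos h, if_pos h2, if_pos h3, if_pos h4, if_pos h5, if_pos h6]
      obtain rfl : e = -a - c - d := by omega
      push_cast
      ring
    · have h2 : ¬(a + d + c + e = 0) := by omega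
      have h3 : ¬(a + e + c + d = 0) := by omega
      have h4 : ¬(c + d + a + e = 0) := by omega
      have h5 : ¬(c + e + a + d = 0) := by omega
      have h6 : ¬(d + e + a + c = 0) := by omega
      rw [if_neg h, if_neg h2, if_neg h3, if_neg h4, if_neg h5, if_neg h6]
      ring
  -- bundle the coboundary expression as a multilinear map
  let D : MultilinearMap K (fun _ : Fin 4 => V) K :=
    { toFun := fun v =>
        Ψ ![⁅v 0, v 1⁆, v 2, v 3] - Ψ ![⁅v 0, v 2⁆, v 1, v 3] + Ψ ![⁅v 0, v 3⁆, v 1, v 2]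
          + Ψ ![⁅v 1, v 2⁆, v 0, v 3] - Ψ ![⁅v 1, v 3⁆, v 0, v 2] + Ψ ![⁅v 2, v 3⁆, v 0, v 1]
      map_update_add' := by
        intro dec m i x y
        obtain rfl : dec = instDecidableEqFin 4 := Subsingleton.elim _ _
        fin_cases i <;> simp only [Fin.zero_eta, Fin.mk_one, Fin.reduceFinMk]
        · rw [upd4_0 m (x + y), upd4_0 m x, upd4_0 m y]
          simp [add_lie, lie_add, A3add0, A3add1, A3add2]; ring
        · rw [upd4_1 m (x + y), upd4_1 m x, upd4_1 m y]
          simp [add_lie, lie_add, A3add0, A3add1, A3add2]; ring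
        · rw [upd4_2 m (x + y), upd4_2 m x, upd4_2 m y]
          simp [add_lie, lie_add, A3add0, A3add1, A3add2]; ring
        · rw [upd4_3 m (x + y), upd4_3 m x, upd4_3 m y]
          simp [add_lie, lie_add, A3add0, A3add1, A3add2]; ring
      map_update_smul' := by
        intro dec m i c x
        obtain rfl : dec = instDecidableEqFin 4 := Subsingleton.elim _ _
        fin_cases i <;> simp only [Fin.zero_eta, Fin.mk_one, Fin.reduceFinMk]
        · rw [upd4_0 m (c • x), upd4_0 m x]
          simp [smul_lie, lie_smul, A3smul0, A3smul1, A3smul2, smul_eq_mul]; ring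
        · rw [upd4_1 m (c • x), upd4_1 m x]
          simp [smul_lie, lie_smul, A3smul0, A3smul1, A3smul2, smul_eq_mul]; ring
        · rw [upd4_2 m (c • x), upd4_2 m x]
          simp [smul_lie, lie_smul, A3smul0, A3smul1, A3smul2, smul_eq_mul]; ring
        · rw [upd4_3 m (c • x), upd4_3 m x]
          simp [smul_lie, lie_smul, A3smul0, A3smul1, A3smul2, smul_eq_mul]; ring }
  have hDapp : ∀ x₁ x₂ x₃ x₄ : V,
      D ![x₁, x₂, x₃, x₄] =
        Ψ ![⁅x₁, x₂⁆, x₃, x₄] - Ψ ![⁅x₁, x₃⁆, x₂, x₄] + Ψ ![⁅x₁, x₄⁆, x₂, x₃]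
          + Ψ ![⁅x₂, x₃⁆, x₁, x₄] - Ψ ![⁅x₂, x₄⁆, x₁, x₃] + Ψ ![⁅x₃, x₄⁆, x₁, x₂] :=
    fun _ _ _ _ => rfl
  -- the expression vanishes whenever one argument is `t`
  have hT0 : ∀ y z w : V, D ![t, y, z, w] = 0 := by
    intro y z w; rw [hDapp]; simp [hct, htc, Ψt1, hΨt, A3zero0]
  have hT1 : ∀ x z w : V, D ![x, t, z, w] = 0 := by
    intro x z w; rw [hDapp]; simp [hct, htc, Ψt1, hΨt, A3zero0]
  have hT2 : ∀ x y w : V, D ![x, y, t, w] = 0 := by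
    intro x y w; rw [hDapp]; simp [hct, htc, Ψt1, hΨt, A3zero0]
  have hT3 : ∀ x y z : V, D ![x, y, z, t] = 0 := by
    intro x y z; rw [hDapp]; simp [hct, htc, Ψt1, hΨt, A3zero0]
  have hbase : ∀ o0 o1 o2 o3 : Option ℤ, D ![b o0, b o1, b o2, b o3] = 0 := by
    intro o0 o1 o2 o3
    cases o0 with
    | none => rw [hbt]; exact hT0 _ _ _
    | some n0 =>
      cases o1 with
      | none => rw [hbt]; exact hT1 _ _ _
      | some n1 =>
        cases o2 with
        | none => rw [hbt]; exact hT2 _ _ _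
        | some n2 =>
          cases o3 with
          | none => rw [hbt]; exact hT3 _ _ _
          | some n3 =>
            rw [hbE, hbE, hbE, hbE, hDapp]
            exact key n0 n1 n2 n3
  have hD0 : D = 0 := by
    apply Module.Basis.ext_multilinear (fun _ => b)
    intro v
    have e : (fun i => b (v i)) = ![b (v 0), b (v 1), b (v 2), b (v 3)] := by
      funext i; fin_cases i <;> rfl
    rw [e, hbase]
    simp
  constructor
  · intro x₁ x₂ x₃ x₄
    have h := hDapp x₁ x₂ x₃ x₄
    rw [hD0] at h
    simpa using h.symm
  · rintro ⟨φ, hφ⟩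
    clear hT0 hT1 hT2 hT3 hbase hD0 hDapp key hterm
    clear_value D
    clear D
    have hexp : ∀ a c n : ℤ, a + c ≠ 0 →
        φ ![⁅E a, E c⁆, E n] = ((c - a : ℤ) : K) * φ ![E (a + c), E n] := by
      intro a c n h
      rw [hbrk a c, if_neg h, zero_smul, add_zero, A2zsmul0]
    have heq : ∀ a c : ℤ, a ≠ 0 → c ≠ 0 → a + c ≠ 0 →
        (((a - c) * (c - (-(a + c))) * (a - (-(a + c))) : ℤ) : K) =
          ((c - a : ℤ) : K) * φ ![E (a + c), E (-(a + c))]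
            - ((-(a + c) - a : ℤ) : K) * φ ![E (-c), E c]
            + ((-(a + c) - c : ℤ) : K) * φ ![E (-a), E a] := by
      intro a c ha hc hac
      have h := hφ (E a) (E c) (E (-(a + c)))
      rw [hΨ, if_pos (by omega)] at h
      simp only [lieD2] at h
      rw [hexp a c _ hac, hexp a (-(a + c)) _ (by omega), hexp c (-(a + c)) _ (by omega)] at h
      rw [show a + -(a + c) = -c from by ring, show c + -(a + c) = -a from by ring] at h
      exact h
    have h21 := heq 2 1 (by norm_num) (by norm_num) (by norm_num)
    have h31 := heq 3 1 (by norm_num) (by norm_num) (by norm_num)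
    have h41 := heq 4 1 (by norm_num) (by norm_num) (by norm_num)
    have h51 := heq 5 1 (by norm_num) (by norm_num) (by norm_num)
    have h42 := heq 4 2 (by norm_num) (by norm_num) (by norm_num)
    rw [A2swap φ (E (-1)) (E 1), A2swap φ (E (-2)) (E 2)] at h21
    rw [A2swap φ (E (-1)) (E 1), A2swap φ (E (-3)) (E 3)] at h31
    rw [A2swap φ (E (-1)) (E 1), A2swap φ (E (-4)) (E 4)] at h41
    rw [A2swap φ (E (-1)) (E 1), A2swap φ (E (-5)) (E 5)] at h51
    rw [A2swap φ (E (-2)) (E 2), A2swap φ (E (-4)) (E 4)] at h42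
    norm_num at h21 h31 h41 h51 h42
    have h0 : (588 : K) = 0 := by
      linear_combination (-15 : K) * h21 + (-3 : K) * h31 + (7 : K) * h41 + (3 : K) * h51
        + (-6 : K) * h42
    norm_num at h0
end

section
/- Let ψ' be a 3-cocycle of the Witt algebra W with values in the trivial module K that is homogeneous of degree zero and satisfies ψ'(e_1, e_{−1}, e_0) = 0. Then there exists a 2-cochain φ of W with values in K such that the cohomologous cocycle ψ = ψ' − δ_2 φ satisfies ψ(e_i, e_j, e_1) = 0 for all i, j ∈ ℤ. -/
/-- An alternating 2-form from a bilinear map vanishing on the diagonal. -/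
def bilinToAlt {K W : Type*} [Field K] [LieRing W] [LieAlgebra K W]
    (D : W →ₗ[K] W →ₗ[K] K) (hD : ∀ x, D x x = 0) :
    AlternatingMap K W K (Fin 2) where
  toFun v := D (v 0) (v 1)
  map_update_add' v i x y := by
    fin_cases i <;> simp [Function.update]
  map_update_smul' v i c x := by
    fin_cases i <;> simp [Function.update]
  map_eq_zero_of_eq' v i j hv hij := by
    fin_cases i <;> fin_cases j <;> simp_all

@[simp] lemma bilinToAlt_apply {K W : Type*} [Field K] [LieRing W] [LieAlgebra K W]
    (D : W →ₗ[K] W →ₗ[K] K) (hD : ∀ x, D x x = 0) (x y : W) :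
    bilinToAlt D hD ![x, y] = D x y := rfl

/-- The recursively defined sequence `g (n+2)`. -/
def wittG (K : Type*) [Field K] (f : ℤ → K) : ℕ → K
  | 0 => 0
  | n + 1 => (((n : K) + 4) * wittG K f n + f ((n : ℤ) + 2)) / ((n : K) + 1)

/-- if `ψ'` is a degree-zero 3-cocycle of the Witt algebra with values in
the trivial module `K` and `ψ'(e₁, e₋₁, e₀) = 0`, then there is a 2-cochain `φ` such that
the cohomologous cocycle `ψ = ψ' - δ₂ φ` satisfies `ψ(e i, e j, e 1) = 0` for all `i, j`. -/
theorem witt_cocycle_normalize_level_one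
    {K W : Type*} [Field K] [CharZero K] [LieRing W] [LieAlgebra K W]
    (e : ℤ → W) (hW : IsWittAlgebra K e)
    (ψ' : AlternatingMap K W K (Fin 3)) (hcoc : IsLieCocycle3 K ψ')
    (hdeg : ∀ i j k : ℤ, i + j + k ≠ 0 → ψ' ![e i, e j, e k] = 0)
    (h0 : ψ' ![e 1, e (-1), e 0] = 0) :
    ∃ φ : AlternatingMap K W K (Fin 2), ∀ i j : ℤ,
      ψ' ![e i, e j, e 1] - lieD2 K φ (e i) (e j) (e 1) = 0 := by
  obtain ⟨⟨b, hb⟩, hbr⟩ := hW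
  set f : ℤ → K := fun i => ψ' ![e i, e (-1 - i), e 1] with hf
  -- antisymmetry of f
  have hf_swap : ∀ i : ℤ, f (-1 - i) = -f i := by
    intro i
    have hv : (![e (-1 - i), e i, e 1] : Fin 3 → W) =
        ![e i, e (-1 - i), e 1] ∘ Equiv.swap (0 : Fin 3) 1 := by
      funext k; fin_cases k <;> simp [Equiv.swap_apply_def]
    simp only [hf]
    rw [show (-1 - (-1 - i) : ℤ) = i by ring, hv, ψ'.map_swap _ (by decide)]
  have hf1 : f 1 = 0 := by
    simp only [hf, show (-1 - 1 : ℤ) = -2 by norm_num]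
    exact ψ'.map_eq_zero_of_eq _
      (show (![e 1, e (-2), e 1] : Fin 3 → W) 0 = ![e 1, e (-2), e 1] 2 from rfl) (by decide)
  have hf0 : f 0 = 0 := by
    have hv : (![e 0, e (-1), e 1] : Fin 3 → W) =
        ![e 1, e (-1), e 0] ∘ Equiv.swap (0 : Fin 3) 2 := by
      funext k; fin_cases k <;> simp [Equiv.swap_apply_def]
    simp only [hf, show (-1 - 0 : ℤ) = -1 by norm_num]
    rw [hv, ψ'.map_swap _ (by decide), h0, neg_zero]
  have hfm1 : f (-1) = 0 := by
    have := hf_swap 0; rw [hf0] at this; simpa using this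
  have hfm2 : f (-2) = 0 := by
    have := hf_swap 1; rw [hf1] at this; simpa using this
  set G : ℕ → K := wittG K f with hG
  set g : ℤ → K := fun i => if 2 ≤ i then G (i - 2).toNat
      else if i ≤ -2 then -G (-i - 2).toNat else 0 with hg
  have hG0 : G 0 = 0 := by rw [hG]; rfl
  have hGrec : ∀ n : ℕ, ((n : K) + 1) * G (n + 1) = ((n : K) + 4) * G n + f ((n : ℤ) + 2) := by
    intro n
    have hne : ((n : K) + 1) ≠ 0 := by
      have : (((n + 1 : ℕ)) : K) ≠ 0 := Nat.cast_ne_zero.mpr (Nat.succ_ne_zero n)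
      push_cast at this; exact this
    rw [hG, wittG, mul_div_cancel₀ _ hne]
  have hgval : ∀ n : ℕ, g ((n : ℤ) + 2) = G n := by
    intro n
    simp only [hg]
    rw [if_pos (by omega)]
    congr 1; omega
  have hgnegval : ∀ n : ℕ, g (-(n : ℤ) - 2) = -G n := by
    intro n
    simp only [hg]
    rw [if_neg (by omega), if_pos (by omega)]
    congr 2; omega
  have hgneg : ∀ i : ℤ, g (-i) = -g i := by
    intro i
    rcases le_or_gt 2 i with h | h
    · obtain ⟨n, rfl⟩ : ∃ n : ℕ, i = (n : ℤ) + 2 := ⟨(i - 2).toNat, by omega⟩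
      rw [show (-((n : ℤ) + 2)) = -(n : ℤ) - 2 by ring, hgnegval, hgval]
    rcases le_or_gt i (-2) with h' | h'
    · obtain ⟨n, rfl⟩ : ∃ n : ℕ, i = -(n : ℤ) - 2 := ⟨(-i - 2).toNat, by omega⟩
      rw [show (-(-(n : ℤ) - 2)) = (n : ℤ) + 2 by ring, hgnegval, hgval, neg_neg]
    · simp only [hg]
      rw [if_neg (by omega), if_neg (by omega), if_neg (by omega), if_neg (by omega), neg_zero]
  have hg2 : g 2 = 0 := by have := hgval 0; rw [hG0] at this; simpa using this
  have hgm2 : g (-2) = 0 := by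
    have := hgnegval 0; rw [hG0] at this; simpa using this
  have hg0 : g 0 = 0 := by simp only [hg]; rw [if_neg (by omega), if_neg (by omega)]
  have hg1 : g 1 = 0 := by simp only [hg]; rw [if_neg (by omega), if_neg (by omega)]
  have hgm1 : g (-1) = 0 := by simp only [hg]; rw [if_neg (by omega), if_neg (by omega)]
  -- the key recurrence, valid for all integers
  have hR : ∀ i : ℤ, ((i : K) - 1) * g (i + 1) = ((i : K) + 2) * g i + f i := by
    intro i
    rcases le_or_gt 2 i with h | h
    · obtain ⟨n, rfl⟩ : ∃ n : ℕ, i = (n : ℤ) + 2 := ⟨(i - 2).toNat, by omega⟩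
      have e1 : ((n : ℤ) + 2 + 1) = ((n + 1 : ℕ) : ℤ) + 2 := by push_cast; ring
      rw [e1, hgval, hgval]
      have h' := hGrec n
      push_cast
      push_cast at h'
      linear_combination h'
    rcases le_or_gt i (-3) with h' | h'
    · obtain ⟨n, rfl⟩ : ∃ n : ℕ, i = -(n : ℤ) - 3 := ⟨(-i - 3).toNat, by omega⟩
      have e1 : (-(n : ℤ) - 3 + 1) = -(n : ℤ) - 2 := by ring
      have e2 : (-(n : ℤ) - 3) = -((n + 1 : ℕ) : ℤ) - 2 := by push_cast; ring
      have e3 : f (-(n : ℤ) - 3) = -f ((n : ℤ) + 2) := by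
        have h'' := hf_swap ((n : ℤ) + 2)
        rw [show (-1 - ((n : ℤ) + 2)) = -(n : ℤ) - 3 by ring] at h''
        exact h''
      rw [e1, hgnegval, e2, hgnegval, ← e2, e3]
      have h'' := hGrec n
      push_cast
      push_cast at h''
      linear_combination -h''
    · interval_cases i <;>
        norm_num [hg0, hg1, hgm1, hg2, hgm2, hf0, hf1, hfm1, hfm2]
  -- the bilinear map
  set hh : ℤ → ℤ → K := fun a c => if a + c = 0 then g a / 2 else 0 with hhh
  set B : W →ₗ[K] W →ₗ[K] K := b.constr K (fun a => b.constr K (fun c => hh a c)) with hB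
  set D : W →ₗ[K] W →ₗ[K] K := B - B.flip with hD
  have hDdiag : ∀ x, D x x = 0 := by intro x; simp [hD]
  have hBval : ∀ a c : ℤ, B (e a) (e c) = hh a c := by
    intro a c
    rw [hB, ← hb a, ← hb c, Module.Basis.constr_basis, Module.Basis.constr_basis]
  have hDval : ∀ a c : ℤ, D (e a) (e c) = if a + c = 0 then g a else 0 := by
    intro a c
    by_cases hac : a + c = 0
    · rw [if_pos hac, hD]
      simp only [LinearMap.sub_apply, LinearMap.flip_apply, hBval]
      simp only [hhh]
      rw [if_pos hac, if_pos (show c + a = 0 by omega)]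
      have hgc : g c = -g a := by
        have h'' := hgneg a; rwa [show -a = c by omega] at h''
      rw [hgc]; ring
    · rw [if_neg hac, hD]
      simp only [LinearMap.sub_apply, LinearMap.flip_apply, hBval]
      simp only [hhh]
      rw [if_neg hac, if_neg (show ¬ c + a = 0 by omega), sub_zero]
  refine ⟨bilinToAlt D hDdiag, fun i j => ?_⟩
  have hzs : ∀ (n : ℤ) (x y : W), D (n • x) y = (n : K) * D x y := by
    intro n x y
    rw [map_zsmul]
    simp [zsmul_eq_mul]
  rw [lieD2, bilinToAlt_apply, bilinToAlt_apply, bilinToAlt_apply,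
    hbr i j, hbr i 1, hbr j 1, hzs, hzs, hzs, hDval, hDval, hDval]
  by_cases hij : i + j + 1 = 0
  · have hj : j = -1 - i := by omega
    subst hj
    rw [if_pos (by omega), if_pos (by omega), if_pos (by omega)]
    rw [show (i + (-1 - i) : ℤ) = -1 by ring, hgm1]
    have hgm : g (-1 - i + 1) = -g i := by
      rw [show (-1 - i + 1 : ℤ) = -i by ring, hgneg]
    rw [hgm]
    have h' := hR i
    rw [hf] at h'
    push_cast
    push_cast at h'
    linear_combination -h'
  · rw [if_neg (by omega), if_neg (by omega), if_neg (by omega)]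
    rw [show ψ' ![e i, e j, e 1] = 0 from hdeg i j 1 hij]
    ring
end

section
/- Let ψ be a 3-cocycle of the Witt algebra W with values in the trivial module K that is homogeneous of degree zero and satisfies ψ(e_i, e_j, e_1) = 0 for all i, j ∈ ℤ. Then ψ = 0, i.e. ψ(e_i, e_j, e_k) = 0 for all i, j, k ∈ ℤ. -/
section WittAux

set_option linter.unusedSectionVars false

variable {K W : Type*} [Field K] [CharZero K] [LieRing W] [LieAlgebra K W]
variable (ψ : AlternatingMap K W K (Fin 3))

lemma witt_aux_smul0 (x y z : W) (r : K) : ψ ![r • x, y, z] = r * ψ ![x, y, z] := by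
  have e2 : Function.update ![x,y,z] 0 x = ![x, y, z] := by
    ext i; fin_cases i <;> simp
  have e1 : ![r • x, y, z] = Function.update ![x,y,z] 0 (r • x) := by
    ext i; fin_cases i <;> simp
  rw [e1, ψ.map_update_smul, e2, smul_eq_mul]

lemma witt_aux_zsmul0 (x y z : W) (n : ℤ) : ψ ![n • x, y, z] = (n : K) * ψ ![x, y, z] := by
  rw [← Int.cast_smul_eq_zsmul K n x, witt_aux_smul0]

lemma witt_aux_pA (x y z : W) : ψ ![x, y, z] = -ψ ![y, x, z] := by
  have h := ψ.map_swap ![y,x,z] (i := 0) (j := 1) (by decide)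
  have e : (![y,x,z] ∘ Equiv.swap (0:Fin 3) 1) = ![x,y,z] := by
    ext i; fin_cases i <;> simp [Equiv.swap_apply_def]
  rw [e] at h; rw [h]

lemma witt_aux_pB (x y z : W) : ψ ![x, y, z] = -ψ ![x, z, y] := by
  have h := ψ.map_swap ![x,z,y] (i := 1) (j := 2) (by decide)
  have e : (![x,z,y] ∘ Equiv.swap (1:Fin 3) 2) = ![x,y,z] := by
    ext i; fin_cases i <;> simp [Equiv.swap_apply_def]
  rw [e] at h; rw [h]

lemma witt_aux_pC (x y z : W) : ψ ![x, y, z] = -ψ ![z, y, x] := by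
  have h := ψ.map_swap ![z,y,x] (i := 0) (j := 2) (by decide)
  have e : (![z,y,x] ∘ Equiv.swap (0:Fin 3) 2) = ![x,y,z] := by
    ext i; fin_cases i <;> simp [Equiv.swap_apply_def]
  rw [e] at h; rw [h]

lemma witt_aux_pD (x y z : W) : ψ ![x, y, z] = ψ ![y, z, x] := by
  rw [witt_aux_pA ψ x y z, witt_aux_pB ψ y x z, neg_neg]

lemma witt_aux_pE (x y z : W) : ψ ![x, y, z] = ψ ![z, x, y] := by
  rw [witt_aux_pA ψ x y z, witt_aux_pC ψ y x z, neg_neg]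

lemma witt_aux_E01 (x y : W) : ψ ![x, x, y] = 0 :=
  ψ.map_eq_zero_of_eq ![x,x,y] (i := 0) (j := 1) (by simp) (by decide)

lemma witt_aux_E02 (x y : W) : ψ ![x, y, x] = 0 :=
  ψ.map_eq_zero_of_eq ![x,y,x] (i := 0) (j := 2) (by simp) (by decide)

lemma witt_aux_E12 (x y : W) : ψ ![y, x, x] = 0 :=
  ψ.map_eq_zero_of_eq ![y,x,x] (i := 1) (j := 2) (by simp) (by decide)

lemma witt_R6 (e : ℤ → W) (hb : ∀ n m : ℤ, ⁅e n, e m⁆ = (m - n) • e (n + m))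
    (hcoc : IsLieCocycle3 K ψ) (a b c d : ℤ) :
    ((b:K)-(a:K)) * ψ ![e (a+b), e c, e d] - ((c:K)-(a:K)) * ψ ![e (a+c), e b, e d]
    + ((d:K)-(a:K)) * ψ ![e (a+d), e b, e c] + ((c:K)-(b:K)) * ψ ![e (b+c), e a, e d]
    - ((d:K)-(b:K)) * ψ ![e (b+d), e a, e c] + ((d:K)-(c:K)) * ψ ![e (c+d), e a, e b] = 0 := by
  have h := hcoc (e a) (e b) (e c) (e d)
  rw [hb, hb, hb, hb, hb, hb] at h
  rw [witt_aux_zsmul0, witt_aux_zsmul0, witt_aux_zsmul0, witt_aux_zsmul0,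
      witt_aux_zsmul0, witt_aux_zsmul0] at h
  push_cast at h
  linear_combination h

end WittAux

/-- a degree-zero 3-cocycle `ψ` of the Witt algebra with values in the
trivial module `K` with `ψ(e i, e j, e 1) = 0` for all `i, j` vanishes identically. -/
theorem witt_cocycle_level_one_zero_is_zero
    {K W : Type*} [Field K] [CharZero K] [LieRing W] [LieAlgebra K W]
    (e : ℤ → W) (hW : IsWittAlgebra K e)
    (ψ : AlternatingMap K W K (Fin 3)) (hcoc : IsLieCocycle3 K ψ)
    (hdeg : ∀ i j k : ℤ, i + j + k ≠ 0 → ψ ![e i, e j, e k] = 0)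
    (h1 : ∀ i j : ℤ, ψ ![e i, e j, e 1] = 0) :
    ∀ i j k : ℤ, ψ ![e i, e j, e k] = 0 := by
  obtain ⟨-, hb⟩ := hW
  have R6 := witt_R6 ψ e hb hcoc
  have pA := witt_aux_pA ψ
  have pB := witt_aux_pB ψ
  have pC := witt_aux_pC ψ
  have pD := witt_aux_pD ψ
  have pE := witt_aux_pE ψ
  have hE01 : ∀ i j : ℤ, ψ ![e i, e i, e j] = 0 := fun i j => witt_aux_E01 ψ (e i) (e j)
  have hE02 : ∀ i j : ℤ, ψ ![e i, e j, e i] = 0 := fun i j => witt_aux_E02 ψ (e i) (e j)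
  have hE12 : ∀ i j : ℤ, ψ ![e j, e i, e i] = 0 := fun i j => witt_aux_E12 ψ (e i) (e j)
  have hZc : ∀ i j : ℤ, ψ ![e i, e j, e 1] = 0 := h1
  have hZb : ∀ i j : ℤ, ψ ![e i, e 1, e j] = 0 := by
    intro i j; rw [pB (e i) (e 1) (e j), hZc i j, neg_zero]
  have hZa : ∀ i j : ℤ, ψ ![e 1, e i, e j] = 0 := by
    intro i j; rw [pA (e 1) (e i) (e j), hZb i j, neg_zero]
  -- Phase 1: ψ (e 2, e 0, e (-2)) = 0
  have r0 := R6 (-3) 0 1 2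
  norm_num at r0
  have hv_3_0_m3 : ψ ![e 3, e 0, e (-3)] = (4 : K) * ψ ![e 2, e 0, e (-2)] := by
    linear_combination ((-1) : K) * r0 + (3 : K) * (hZb (-3) 2) + ((-4) : K) * (pC (e (-2)) (e 0) (e 2)) + (5 : K) * (hZc (-1) 0) + (1 : K) * (hZa (-3) 2) + ((-2) : K) * (hZc 2 (-3)) + (1 : K) * (pB (e 3) (e (-3)) (e 0))
  have r1 := R6 (-2) (-1) 1 2
  norm_num at r1
  have hv_3_m1_m2 : ψ ![e 3, e (-1), e (-2)] = (2 : K) * ψ ![e 2, e 0, e (-2)] := by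
    linear_combination ((-1) : K) * r1 + (1 : K) * (hZb (-3) 2) + ((-3) : K) * (hE01 (-1) 2) + (4 : K) * (hZc 0 (-1)) + (2 : K) * (pE (e 0) (e (-2)) (e 2)) + ((-3) : K) * (hZa (-2) 1) + (1 : K) * (pB (e 3) (e (-2)) (e (-1)))
  have r2 := R6 (-5) 0 2 3
  norm_num at r2
  have hv_5_0_m5 : ψ ![e 5, e 0, e (-5)] = (20 : K) * ψ ![e 2, e 0, e (-2)] := by
    linear_combination ((-1) : K) * r2 + (5 : K) * (pC (e (-5)) (e 2) (e 3)) + ((-7) : K) * (pC (e (-3)) (e 0) (e 3)) + (8 : K) * (pC (e (-2)) (e 0) (e 2)) + (2 : K) * (pE (e 2) (e (-5)) (e 3)) + ((-3) : K) * (pB (e 3) (e (-5)) (e 2)) + (1 : K) * (pB (e 5) (e (-5)) (e 0)) + (7 : K) * hv_3_0_m3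
  have r3 := R6 (-4) (-1) 0 5
  norm_num at r3
  have hv_4_0_m4 : ψ ![e 4, e 0, e (-4)] = (10 : K) * ψ ![e 2, e 0, e (-2)] := by
    linear_combination ((1 : K)/6) * r3 + ((-1 : K)/2) * (pC (e (-5)) (e 0) (e 5)) + ((2 : K)/3) * (pC (e (-4)) (e (-1)) (e 5)) + ((-3 : K)/2) * (hZa (-1) 0) + ((-1 : K)/6) * (pE (e (-1)) (e (-4)) (e 5)) + (1 : K) * (pB (e 4) (e (-4)) (e 0)) + ((-5 : K)/6) * (pB (e 5) (e (-4)) (e (-1))) + ((1 : K)/2) * hv_5_0_m5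
  have r4 := R6 (-3) (-1) 1 3
  norm_num at r4
  have hv_4_m1_m3 : ψ ![e 4, e (-1), e (-3)] = (8 : K) * ψ ![e 2, e 0, e (-2)] := by
    linear_combination ((-1 : K)/2) * r4 + (1 : K) * (hZb (-4) 3) + ((-2) : K) * (pC (e (-2)) (e (-1)) (e 3)) + (3 : K) * (hZc 0 (-1)) + (1 : K) * (pE (e 0) (e (-3)) (e 3)) + ((-2) : K) * (hZc 2 (-3)) + (1 : K) * (pB (e 4) (e (-3)) (e (-1))) + (2 : K) * hv_3_m1_m2 + (1 : K) * hv_3_0_m3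
  have r5 := R6 (-4) (-1) 1 4
  norm_num at r5
  have hv_5_m1_m4 : ψ ![e 5, e (-1), e (-4)] = (20 : K) * ψ ![e 2, e 0, e (-2)] := by
    linear_combination ((-1 : K)/3) * r5 + (1 : K) * (hZb (-5) 4) + ((-5 : K)/3) * (pC (e (-3)) (e (-1)) (e 4)) + ((8 : K)/3) * (hZc 0 (-1)) + ((2 : K)/3) * (pE (e 0) (e (-4)) (e 4)) + ((-5 : K)/3) * (hZc 3 (-4)) + (1 : K) * (pB (e 5) (e (-4)) (e (-1))) + ((5 : K)/3) * hv_4_m1_m3 + ((2 : K)/3) * hv_4_0_m4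
  have r6 := R6 (-3) (-2) 1 4
  norm_num at r6
  have hv_5_m2_m3 : ψ ![e 5, e (-2), e (-3)] = (8 : K) * ψ ![e 2, e 0, e (-2)] := by
    linear_combination ((-1 : K)/3) * r6 + ((1 : K)/3) * (hZb (-5) 4) + ((-4 : K)/3) * (hE01 (-2) 4) + ((7 : K)/3) * (hZa (-2) 1) + (1 : K) * (pE (e (-1)) (e (-3)) (e 4)) + ((-2) : K) * (hZc 2 (-3)) + (1 : K) * (pB (e 5) (e (-3)) (e (-2))) + (1 : K) * hv_4_m1_m3
  have r7 := R6 (-4) (-1) 2 3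
  norm_num at r7
  have hv_3_2_m5 : ψ ![e 3, e 2, e (-5)] = ((-8 : K)/3) * ψ ![e 2, e 0, e (-2)] := by
    linear_combination ((-1 : K)/3) * r7 + (1 : K) * (pC (e (-5)) (e 2) (e 3)) + ((-2) : K) * (pC (e (-2)) (e (-1)) (e 3)) + ((7 : K)/3) * (hE01 (-1) 2) + (1 : K) * (hZa (-4) 3) + ((-4 : K)/3) * (hE02 2 (-4)) + ((1 : K)/3) * (pB (e 5) (e (-4)) (e (-1))) + (2 : K) * hv_3_m1_m2 + ((-1 : K)/3) * hv_5_m1_m4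
  have rF := R6 (-3) (-2) 2 3
  norm_num at rF
  have hfin : ((20 : K)/3) * ψ ![e 2, e 0, e (-2)] = 0 := by
    linear_combination (1 : K) * rF + ((-1) : K) * (pC (e (-5)) (e 2) (e 3)) + (5 : K) * (pE (e (-1)) (e (-2)) (e 3)) + ((-6) : K) * (pE (e 0) (e (-2)) (e 2)) + ((-4) : K) * (pE (e 0) (e (-3)) (e 3)) + (5 : K) * (hZa (-3) 2) + ((-1) : K) * (pB (e 5) (e (-3)) (e (-2))) + (1 : K) * hv_3_2_m5 + (5 : K) * hv_3_m1_m2 + ((-4) : K) * hv_3_0_m3 + (1 : K) * hv_5_m2_m3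
  have h202 : ψ ![e 2, e 0, e (-2)] = 0 := by
    have h20 : ((20 : K)/3) ≠ 0 := by norm_num
    exact (mul_eq_zero.mp hfin).resolve_left h20
  -- key reduction lemma
  have key : ∀ a b c : ℤ, a + b + c = 0 →
      ((a : K) - 2) * ψ ![e a, e b, e c]
        = ((c : K) - 1) * ψ ![e (c+1), e b, e (a-1)]
          + ((1 : K) - (b : K)) * ψ ![e (b+1), e c, e (a-1)] := by
    intro a b c hsum
    have r := R6 c 1 b (a-1)
    rw [show (1:ℤ) + b = b + 1 from by ring, show (1:ℤ) + (a-1) = a from by ring] at r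
    push_cast at r
    linear_combination r + ((a:K) - 2) * (pB (e a) (e b) (e c))
      + ((b:K) - (c:K)) * hZb (c+b) (a-1)
      - ((a:K) - 1 - (c:K)) * hZb (c+(a-1)) b
      - ((a:K) - 1 - (b:K)) * hZc (b+(a-1)) c
  -- main induction on the spread
  have main : ∀ n : ℕ, ∀ a b c : ℤ, a + b + c = 0 → c ≤ b → b ≤ a → a - c ≤ (n:ℤ) →
      ψ ![e a, e b, e c] = 0 := by
    intro n
    induction n using Nat.strong_induction_on with
    | _ n IH =>
    intro a b c hsum hcb hba hspread
    have FIH : ∀ x y z : ℤ, x + y + z = 0 → x - y ≤ (n:ℤ) - 1 → y - x ≤ (n:ℤ) - 1 →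
        y - z ≤ (n:ℤ) - 1 → z - y ≤ (n:ℤ) - 1 → x - z ≤ (n:ℤ) - 1 → z - x ≤ (n:ℤ) - 1 →
        ψ ![e x, e y, e z] = 0 := by
      intro x y z hs d1 d2 d3 d4 d5 d6
      have hn1 : 1 ≤ n := by omega
      have hlt : n - 1 < n := by omega
      rcases le_total x y with h | h <;> rcases le_total y z with g | g <;>
        rcases le_total x z with f | f
      · rw [pC (e x) (e y) (e z), IH (n-1) hlt z y x (by omega) (by omega) (by omega) (by omega),
          neg_zero]
      · rw [pC (e x) (e y) (e z), IH (n-1) hlt z y x (by omega) (by omega) (by omega) (by omega),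
          neg_zero]
      · rw [pD (e x) (e y) (e z), IH (n-1) hlt y z x (by omega) (by omega) (by omega) (by omega)]
      · rw [pA (e x) (e y) (e z), IH (n-1) hlt y x z (by omega) (by omega) (by omega) (by omega),
          neg_zero]
      · rw [pE (e x) (e y) (e z), IH (n-1) hlt z x y (by omega) (by omega) (by omega) (by omega)]
      · rw [pB (e x) (e y) (e z), IH (n-1) hlt x z y (by omega) (by omega) (by omega) (by omega),
          neg_zero]
      · exact IH (n-1) hlt x y z (by omega) (by omega) (by omega) (by omega)
      · exact IH (n-1) hlt x y z (by omega) (by omega) (by omega) (by omega)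
    by_cases hbe : b = a
    · rw [show c = c from rfl]; rw [hbe]; exact hE01 a c
    by_cases hce : c = b
    · rw [hce]; exact hE12 b a
    by_cases ha1 : a = 1
    · rw [ha1]; exact hZa b c
    by_cases hb1 : b = 1
    · rw [hb1]; exact hZb a c
    by_cases hc1 : c = 1
    · rw [hc1]; exact hZc a b
    by_cases ha2 : a = 2
    · have hb0 : b = 0 := by omega
      have hcm2 : c = -2 := by omega
      rw [ha2, hb0, hcm2]; exact h202
    have ha3 : 3 ≤ a := by omega
    by_cases hbe1 : b = a - 1
    · -- negation trick
      have hcv : c = 1 - 2*a := by omega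
      have hP : ψ ![e (-1), e (1-a), e a] = 0 :=
        FIH (-1) (1-a) a (by ring) (by omega) (by omega) (by omega) (by omega) (by omega)
          (by omega)
      have hQ : ψ ![e 0, e (1-a), e (a-1)] = 0 :=
        FIH 0 (1-a) (a-1) (by ring) (by omega) (by omega) (by omega) (by omega) (by omega)
          (by omega)
      have hR : ψ ![e 0, e (-a), e a] = 0 :=
        FIH 0 (-a) a (by ring) (by omega) (by omega) (by omega) (by omega) (by omega) (by omega)
      have hsub1 : ψ ![e (-a+1), e (1-a), e (2*a-1-1)] = 0 :=
        FIH (-a+1) (1-a) (2*a-1-1) (by ring) (by omega) (by omega) (by omega) (by omega)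
          (by omega) (by omega)
      have hsub2 : ψ ![e (1-a+1), e (-a), e (2*a-1-1)] = 0 :=
        FIH (1-a+1) (-a) (2*a-1-1) (by ring) (by omega) (by omega) (by omega) (by omega)
          (by omega) (by omega)
      have hA : ψ ![e (2*a-1), e (1-a), e (-a)] = 0 := by
        have k := key (2*a-1) (1-a) (-a) (by ring)
        rw [hsub1, hsub2] at k
        have k2 : ((2*(a:K) - 1) - 2) * ψ ![e (2*a-1), e (1-a), e (-a)] = 0 := by
          push_cast at k; linear_combination k
        have hne : ((2*(a:K) - 1) - 2) ≠ 0 := by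
          have h' : ((2*a - 3 : ℤ) : K) ≠ 0 := Int.cast_ne_zero.mpr (by omega)
          push_cast at h'
          intro hcon; apply h'; linear_combination hcon
        exact (mul_eq_zero.mp k2).resolve_left hne
      have r := R6 (-a) (1-a) (a-1) a
      rw [show -a + (1-a) = c from by omega, show -a + (a-1) = -1 from by ring,
          show -a + a = 0 from by ring, show (1-a) + (a-1) = 0 from by ring,
          show (1-a) + a = 1 from by ring, show (a-1) + a = 2*a-1 from by ring] at r
      push_cast at r
      rw [hbe1]
      linear_combination (-1 : K) * r + pC (e a) (e (a-1)) (e c)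
        - ((2*(a:K) - 1)) * hP + (2*(a:K)) * hQ + (2*(a:K) - 2) * hR
        - (2*(a:K) - 1) * hZa (-a) (a-1) + pB (e (2*a-1)) (e (1-a)) (e (-a)) - hA
    · -- generic case: b ≤ a - 2
      have hs1 : ψ ![e (c+1), e b, e (a-1)] = 0 :=
        FIH (c+1) b (a-1) (by omega) (by omega) (by omega) (by omega) (by omega) (by omega)
          (by omega)
      have hs2 : ψ ![e (b+1), e c, e (a-1)] = 0 :=
        FIH (b+1) c (a-1) (by omega) (by omega) (by omega) (by omega) (by omega) (by omega)
          (by omega)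
      have k := key a b c hsum
      rw [hs1, hs2] at k
      have k2 : ((a:K) - 2) * ψ ![e a, e b, e c] = 0 := by linear_combination k
      have hne : ((a:K) - 2) ≠ 0 := by
        have h' : ((a - 2 : ℤ) : K) ≠ 0 := Int.cast_ne_zero.mpr (by omega)
        push_cast at h'
        intro hcon; apply h'; linear_combination hcon
      exact (mul_eq_zero.mp k2).resolve_left hne
  -- conclusion
  intro i j k
  by_cases hs : i + j + k = 0
  · rcases le_total i j with h | h <;> rcases le_total j k with g | g <;>
      rcases le_total i k with f | f
    · rw [pC (e i) (e j) (e k),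
        main (k - i).toNat k j i (by omega) (by omega) (by omega) (by omega), neg_zero]
    · rw [pC (e i) (e j) (e k),
        main (k - i).toNat k j i (by omega) (by omega) (by omega) (by omega), neg_zero]
    · rw [pD (e i) (e j) (e k),
        main (j - i).toNat j k i (by omega) (by omega) (by omega) (by omega)]
    · rw [pA (e i) (e j) (e k),
        main (j - k).toNat j i k (by omega) (by omega) (by omega) (by omega), neg_zero]
    · rw [pE (e i) (e j) (e k),
        main (k - j).toNat k i j (by omega) (by omega) (by omega) (by omega)]
    · rw [pB (e i) (e j) (e k),
        main (i - j).toNat i k j (by omega) (by omega) (by omega) (by omega), neg_zero]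
    · exact main (i - k).toNat i j k (by omega) (by omega) (by omega) (by omega)
    · exact main (i - k).toNat i j k (by omega) (by omega) (by omega) (by omega)
  · exact hdeg i j k hs
end

section
/- Let ψ be a 3-cocycle of the Virasoro algebra V with values in the trivial module K that is homogeneous of degree zero, satisfies ψ(ê_i, ê_j, ê_1) = 0 for all i, j ∈ ℤ, and satisfies ψ(ê_i, ê_j, t) = δ_{i,−j} · (1/6)(i − 1) i (i + 1) · ψ(ê_2, ê_{−2}, t) for all i, j ∈ ℤ. Then ψ = 0: ψ(ê_i, ê_j, ê_k) = 0 and ψ(ê_i, ê_j, t) = 0 for all i, j, k ∈ ℤ. -/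
section VirasoroHelpers

section Helpers
variable {K V : Type*} [Field K] [LieRing V] [LieAlgebra K V]
  (ψ : AlternatingMap K V K (Fin 3))

lemma upd0 (x y z w : V) : Function.update ![x, y, z] 0 w = ![w, y, z] := by
  funext i; fin_cases i <;> simp

lemma slot0_add (u v y z : V) : ψ ![u + v, y, z] = ψ ![u, y, z] + ψ ![v, y, z] := by
  have h := ψ.map_update_add ![u, y, z] 0 u v
  simpa [upd0] using h

lemma slot0_smul (r : K) (u y z : V) : ψ ![r • u, y, z] = r * ψ ![u, y, z] := by
  have h := ψ.map_update_smul ![u, y, z] 0 r u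
  simpa [upd0] using h

lemma swap01 (x y z : V) : ψ ![y, x, z] = -ψ ![x, y, z] := by
  have h := ψ.map_swap (v := ![x, y, z]) (i := (0 : Fin 3)) (j := 1) (by decide)
  have e : (![x, y, z] : Fin 3 → V) ∘ Equiv.swap (0 : Fin 3) 1 = ![y, x, z] := by
    funext i; fin_cases i <;> simp [Equiv.swap_apply_def]
  rwa [e] at h

lemma swap12 (x y z : V) : ψ ![x, z, y] = -ψ ![x, y, z] := by
  have h := ψ.map_swap (v := ![x, y, z]) (i := (1 : Fin 3)) (j := 2) (by decide)
  have e : (![x, y, z] : Fin 3 → V) ∘ Equiv.swap (1 : Fin 3) 2 = ![x, z, y] := by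
    funext i; fin_cases i <;> simp [Equiv.swap_apply_def]
  rwa [e] at h

lemma swap02 (x y z : V) : ψ ![z, y, x] = -ψ ![x, y, z] := by
  have h := ψ.map_swap (v := ![x, y, z]) (i := (0 : Fin 3)) (j := 2) (by decide)
  have e : (![x, y, z] : Fin 3 → V) ∘ Equiv.swap (0 : Fin 3) 2 = ![z, y, x] := by
    funext i; fin_cases i <;> simp [Equiv.swap_apply_def]
  rwa [e] at h

lemma cyc (x y z : V) : ψ ![z, x, y] = ψ ![x, y, z] := by
  rw [swap01 ψ x z y, swap12 ψ x y z, neg_neg]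

lemma cyc2 (x y z : V) : ψ ![y, z, x] = ψ ![x, y, z] := by
  rw [swap01 ψ z y x, swap02 ψ x y z, neg_neg]

lemma rep01 (x y : V) : ψ ![x, x, y] = 0 :=
  ψ.map_eq_zero_of_eq ![x, x, y] (i := 0) (j := 1) rfl (by decide)

lemma rep02 (x y : V) : ψ ![x, y, x] = 0 :=
  ψ.map_eq_zero_of_eq ![x, y, x] (i := 0) (j := 2) rfl (by decide)

lemma rep12 (x y : V) : ψ ![x, y, y] = 0 :=
  ψ.map_eq_zero_of_eq ![x, y, y] (i := 1) (j := 2) rfl (by decide)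

end Helpers

end VirasoroHelpers

set_option maxHeartbeats 3000000 in
/-- a degree-zero 3-cocycle `ψ` of the Virasoro algebra with values in the
trivial module `K` with `ψ(ê i, ê j, ê 1) = 0` for all `i, j` and
`ψ(ê i, ê j, t) = δ_{i,-j} (1/6)(i-1)i(i+1) ψ(ê 2, ê₋₂, t)` vanishes identically. -/
theorem virasoro_cocycle_level_one_zero_is_zero
    {K V : Type*} [Field K] [CharZero K] [LieRing V] [LieAlgebra K V]
    (E : ℤ → V) (t : V) (hV : IsVirasoroAlgebra K E t)
    (ψ : AlternatingMap K V K (Fin 3)) (hcoc : IsLieCocycle3 K ψ)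
    (hdeg : ∀ i j k : ℤ, i + j + k ≠ 0 → ψ ![E i, E j, E k] = 0)
    (hdegt : ∀ i j : ℤ, i + j ≠ 0 → ψ ![E i, E j, t] = 0)
    (h1 : ∀ i j : ℤ, ψ ![E i, E j, E 1] = 0)
    (hc : ∀ i j : ℤ, ψ ![E i, E j, t] =
      (if i = -j then (((i : K) - 1) * (i : K) * ((i : K) + 1)) / 6 else 0) *
        ψ ![E 2, E (-2), t]) :
    (∀ i j k : ℤ, ψ ![E i, E j, E k] = 0) ∧ (∀ i j : ℤ, ψ ![E i, E j, t] = 0) := by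
  obtain ⟨-, hbr, -⟩ := hV

  have ht : ∀ k l : ℤ, ψ ![t, E k, E l] =
      (if k = -l then (((k : K) - 1) * k * ((k : K) + 1)) / 6 else 0) * ψ ![E 2, E (-2), t] := by
    intro k l
    rw [cyc ψ (E k) (E l) t]
    simpa using hc k l
  have hexp : ∀ n m : ℤ, ∀ y z : V, ψ ![⁅E n, E m⁆, y, z] =
      ((m : K) - n) * ψ ![E (n+m), y, z]
      + (if n + m = 0 then -(((n : K) ^ 3 - n) / 12) else 0) * ψ ![t, y, z] := by
    intro n m y z
    rw [hbr n m, slot0_add, ← Int.cast_smul_eq_zsmul K, slot0_smul, slot0_smul]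
    push_cast
    ring
  have Mg : ∀ i j k l : ℤ,
      (((j : K) - i) * ψ ![E (i+j), E k, E l]
        + (if i + j = 0 then -(((i : K) ^ 3 - i) / 12) else 0) *
          ((if k = -l then (((k : K) - 1) * k * ((k : K) + 1)) / 6 else 0) * ψ ![E 2, E (-2), t]))
    - (((k : K) - i) * ψ ![E (i+k), E j, E l]
        + (if i + k = 0 then -(((i : K) ^ 3 - i) / 12) else 0) *
          ((if j = -l then (((j : K) - 1) * j * ((j : K) + 1)) / 6 else 0) * ψ ![E 2, E (-2), t]))
    + (((l : K) - i) * ψ ![E (i+l), E j, E k]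
        + (if i + l = 0 then -(((i : K) ^ 3 - i) / 12) else 0) *
          ((if j = -k then (((j : K) - 1) * j * ((j : K) + 1)) / 6 else 0) * ψ ![E 2, E (-2), t]))
    + (((k : K) - j) * ψ ![E (j+k), E i, E l]
        + (if j + k = 0 then -(((j : K) ^ 3 - j) / 12) else 0) *
          ((if i = -l then (((i : K) - 1) * i * ((i : K) + 1)) / 6 else 0) * ψ ![E 2, E (-2), t]))
    - (((l : K) - j) * ψ ![E (j+l), E i, E k]
        + (if j + l = 0 then -(((j : K) ^ 3 - j) / 12) else 0) *
          ((if i = -k then (((i : K) - 1) * i * ((i : K) + 1)) / 6 else 0) * ψ ![E 2, E (-2), t]))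
    + (((l : K) - k) * ψ ![E (k+l), E i, E j]
        + (if k + l = 0 then -(((k : K) ^ 3 - k) / 12) else 0) *
          ((if i = -j then (((i : K) - 1) * i * ((i : K) + 1)) / 6 else 0) * ψ ![E 2, E (-2), t]))
      = 0 := by
    intro i j k l
    have H := hcoc (E i) (E j) (E k) (E l)
    simp only [hexp, ht] at H
    linear_combination H
  have az : ∀ p q r : ℤ,
      (p + q + r ≠ 0 ∨ p = 1 ∨ q = 1 ∨ r = 1 ∨ p = q ∨ p = r ∨ q = r) →
      ψ ![E p, E q, E r] = 0 := by
    rintro p q r (h | h | h | h | h | h | h)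
    · exact hdeg p q r h
    · subst h; rw [cyc ψ (E q) (E r) (E 1)]; exact h1 q r
    · subst h; rw [swap12 ψ (E p) (E r) (E 1), h1 p r, neg_zero]
    · subst h; exact h1 p q
    · subst h; exact rep01 ψ (E p) (E r)
    · subst h; exact rep02 ψ (E p) (E q)
    · subst h; exact rep12 ψ (E p) (E q)

  have e1 := Mg (-5) (-2) (2) (5)
  norm_num at e1
  have e2 := Mg (-5) (-2) (3) (4)
  norm_num at e2
  have e3 := Mg (-5) (-1) (1) (5)
  norm_num at e3
  have e4 := Mg (-5) (-1) (2) (4)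
  norm_num at e4
  have e5 := Mg (-5) (0) (1) (4)
  norm_num at e5
  have e6 := Mg (-4) (-3) (2) (5)
  norm_num at e6
  have e7 := Mg (-4) (-3) (3) (4)
  norm_num at e7
  have e8 := Mg (-4) (-2) (1) (5)
  norm_num at e8
  have e9 := Mg (-4) (-2) (2) (4)
  norm_num at e9
  have e10 := Mg (-4) (-1) (1) (4)
  norm_num at e10
  have e11 := Mg (-4) (-1) (2) (3)
  norm_num at e11
  have e12 := Mg (-4) (0) (1) (3)
  norm_num at e12
  have e13 := Mg (-3) (-2) (1) (4)
  norm_num at e13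
  have e14 := Mg (-3) (-1) (1) (3)
  norm_num at e14
  have e15 := Mg (-3) (0) (1) (2)
  norm_num at e15
  have e16 := Mg (-2) (-1) (1) (2)
  norm_num at e16
  have z1 : ψ ![E (-6), E 1, E 5] = 0 := az (-6) (1) (5) (by omega)
  have z2 : ψ ![E (-5), E 1, E 4] = 0 := az (-5) (1) (4) (by omega)
  have z3 : ψ ![E (-4), E 1, E 3] = 0 := az (-4) (1) (3) (by omega)
  have z4 : ψ ![E (-3), E 1, E 2] = 0 := az (-3) (1) (2) (by omega)
  have z5 : ψ ![E (-2), E (-2), E 4] = 0 := az (-2) (-2) (4) (by omega)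
  have z6 : ψ ![E (-1), E (-1), E 2] = 0 := az (-1) (-1) (2) (by omega)
  have z7 : ψ ![E (-1), E 0, E 1] = 0 := az (-1) (0) (1) (by omega)
  have z8 : ψ ![E 0, E (-1), E 1] = 0 := az (0) (-1) (1) (by omega)
  have z9 : ψ ![E 1, E (-5), E 4] = 0 := az (1) (-5) (4) (by omega)
  have z10 : ψ ![E 1, E (-4), E 3] = 0 := az (1) (-4) (3) (by omega)
  have z11 : ψ ![E 1, E (-3), E 2] = 0 := az (1) (-3) (2) (by omega)
  have z12 : ψ ![E 1, E (-2), E 1] = 0 := az (1) (-2) (1) (by omega)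
  have z13 : ψ ![E 2, E (-4), E 2] = 0 := az (2) (-4) (2) (by omega)
  have z14 : ψ ![E 2, E (-3), E 1] = 0 := az (2) (-3) (1) (by omega)
  have z15 : ψ ![E 3, E (-4), E 1] = 0 := az (3) (-4) (1) (by omega)
  have z16 : ψ ![E 4, E (-5), E 1] = 0 := az (4) (-5) (1) (by omega)
  have s1 : ψ ![E (-2), E (-3), E 5] = -ψ ![E (-3), E (-2), E 5] := swap01 ψ (E (-3)) (E (-2)) (E 5)
  have s2 : ψ ![E (-1), E (-4), E 5] = -ψ ![E (-4), E (-1), E 5] := swap01 ψ (E (-4)) (E (-1)) (E 5)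
  have s3 : ψ ![E (-1), E (-3), E 4] = -ψ ![E (-3), E (-1), E 4] := swap01 ψ (E (-3)) (E (-1)) (E 4)
  have s4 : ψ ![E (-1), E (-2), E 3] = -ψ ![E (-2), E (-1), E 3] := swap01 ψ (E (-2)) (E (-1)) (E 3)
  have s5 : ψ ![E 0, E (-5), E 5] = -ψ ![E (-5), E 0, E 5] := swap01 ψ (E (-5)) (E 0) (E 5)
  have s6 : ψ ![E 0, E (-4), E 4] = -ψ ![E (-4), E 0, E 4] := swap01 ψ (E (-4)) (E 0) (E 4)
  have s7 : ψ ![E 0, E (-3), E 3] = -ψ ![E (-3), E 0, E 3] := swap01 ψ (E (-3)) (E 0) (E 3)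
  have s8 : ψ ![E 0, E (-2), E 2] = -ψ ![E (-2), E 0, E 2] := swap01 ψ (E (-2)) (E 0) (E 2)
  have s9 : ψ ![E 2, E (-5), E 3] = -ψ ![E (-5), E 2, E 3] := swap01 ψ (E (-5)) (E 2) (E 3)
  have s10 : ψ ![E 3, E (-5), E 2] = ψ ![E (-5), E 2, E 3] := cyc ψ (E (-5)) (E 2) (E 3)
  have s11 : ψ ![E 3, E (-3), E 0] = ψ ![E (-3), E 0, E 3] := cyc ψ (E (-3)) (E 0) (E 3)
  have s12 : ψ ![E 3, E (-2), E (-1)] = ψ ![E (-2), E (-1), E 3] := cyc ψ (E (-2)) (E (-1)) (E 3)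
  have s13 : ψ ![E 4, E (-4), E 0] = ψ ![E (-4), E 0, E 4] := cyc ψ (E (-4)) (E 0) (E 4)
  have s14 : ψ ![E 4, E (-3), E (-1)] = ψ ![E (-3), E (-1), E 4] := cyc ψ (E (-3)) (E (-1)) (E 4)
  have s15 : ψ ![E 5, E (-5), E 0] = ψ ![E (-5), E 0, E 5] := cyc ψ (E (-5)) (E 0) (E 5)
  have s16 : ψ ![E 5, E (-4), E (-1)] = ψ ![E (-4), E (-1), E 5] := cyc ψ (E (-4)) (E (-1)) (E 5)
  have s17 : ψ ![E 5, E (-3), E (-2)] = ψ ![E (-3), E (-2), E 5] := cyc ψ (E (-3)) (E (-2)) (E 5)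
  have s18 : ψ ![E 6, E (-5), E (-1)] = ψ ![E (-5), E (-1), E 6] := cyc ψ (E (-5)) (E (-1)) (E 6)
  have s19 : ψ ![E 6, E (-4), E (-2)] = ψ ![E (-4), E (-2), E 6] := cyc ψ (E (-4)) (E (-2)) (E 6)
  have s20 : ψ ![E 7, E (-5), E (-2)] = ψ ![E (-5), E (-2), E 7] := cyc ψ (E (-5)) (E (-2)) (E 7)
  have s21 : ψ ![E 7, E (-4), E (-3)] = ψ ![E (-4), E (-3), E 7] := cyc ψ (E (-4)) (E (-3)) (E 7)
  have hX : ψ ![E 2, E (-2), t] = 0 := by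
    linear_combination ((-1 : K)/264) * e1 + ((1 : K)/88) * e6 + ((-29 : K)/1320) * e8 + ((29 : K)/2640) * e3 + ((1 : K)/24) * e10 + ((-3 : K)/44) * e13 + ((1 : K)/440) * e5 + ((39 : K)/880) * e14 + ((-57 : K)/440) * e16 + ((-3 : K)/220) * e15 + ((3 : K)/88) * e12 + ((-3 : K)/44) * e11 + ((-3 : K)/88) * e7 + ((1 : K)/88) * e2 + ((29 : K)/660) * e9 + ((-29 : K)/1320) * e4 + ((-3 : K)/44) * z2 + ((-9 : K)/40) * z3 + ((15 : K)/88) * z4 + ((9 : K)/110) * z5 + ((63 : K)/220) * z6 + ((-21 : K)/110) * z7 + ((-21 : K)/110) * z8 + ((3 : K)/440) * z9 + ((-3 : K)/44) * z10 + ((-39 : K)/440) * z11 + ((63 : K)/220) * z12 + ((9 : K)/110) * z13 + ((-57 : K)/220) * z14 + ((69 : K)/440) * z15 + ((3 : K)/40) * z16 + ((3 : K)/44) * s1 + ((1 : K)/110) * s2 + ((-3 : K)/88) * s3 + ((-9 : K)/88) * s4 + ((-3 : K)/440) * s5 + ((-3 : K)/55) * s6 + ((81 : K)/440) * s7 + ((-3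 : K)/55) * s8 + ((3 : K)/44) * s9 + ((-3 : K)/22) * s10 + ((3 : K)/220) * s11 + ((57 : K)/440) * s12 + ((-3 : K)/44) * s13 + ((-39 : K)/440) * s14 + ((-3 : K)/440) * s15 + ((-5 : K)/88) * s16 + ((9 : K)/44) * s17
  have hG0 : ψ ![E (-2), E 0, E 2] = 0 := by
    linear_combination ((1 : K)/440) * e1 + ((-3 : K)/440) * e6 + ((19 : K)/440) * e8 + ((-19 : K)/880) * e3 + ((-181 : K)/330) * e15 + ((-247 : K)/1320) * e12 + ((-1 : K)/88) * e5 + ((59 : K)/528) * e14 + ((1229 : K)/1320) * e16 + ((1 : K)/11) * e13 + ((-1 : K)/24) * e10 + ((-19 : K)/220) * e9 + ((19 : K)/440) * e4 + ((1 : K)/11) * e11 + ((9 : K)/440) * e7 + ((-3 : K)/440) * e2 + ((1 : K)/11) * z2 + ((21 : K)/40) * z3 + ((943 : K)/1320) * z4 + ((-23 : K)/110) * z5 + ((389 : K)/220) * z6 + ((457 : K)/110) * z7 + ((-423 : K)/110) * z8 + ((-37 : K)/440) * z9 + ((19 : K)/330) * z10 + ((161 : K)/264) * z11 + ((389 : K)/220)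 * z12 + ((-23 : K)/110) * z13 + ((-23 : K)/220) * z14 + ((-617 : K)/1320) * z15 + ((-7 : K)/40) * z16 + ((-9 : K)/220) * s1 + ((-21 : K)/220) * s2 + ((-57 : K)/440) * s3 + ((27 : K)/440) * s4 + ((3 : K)/88) * s5 + ((101 : K)/330) * s6 + ((-511 : K)/1320) * s7 + ((-197 : K)/165) * s8 + ((-9 : K)/220) * s9 + ((51 : K)/220) * s10 + ((181 : K)/330) * s11 + ((-1229 : K)/1320) * s12 + ((247 : K)/660) * s13 + ((-59 : K)/264) * s14 + ((3 : K)/88) * s15 + ((3 : K)/88) * s16 + ((-3 : K)/11) * s17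
  have MgE : ∀ i j k l : ℤ,
      ((j : K) - i) * ψ ![E (i+j), E k, E l]
    - ((k : K) - i) * ψ ![E (i+k), E j, E l]
    + ((l : K) - i) * ψ ![E (i+l), E j, E k]
    + ((k : K) - j) * ψ ![E (j+k), E i, E l]
    - ((l : K) - j) * ψ ![E (j+l), E i, E k]
    + ((l : K) - k) * ψ ![E (k+l), E i, E j] = 0 := by
    intro i j k l
    have H := Mg i j k l
    rw [hX] at H
    simp only [mul_zero, add_zero] at H
    linear_combination H
  have R1 : ∀ i j k : ℤ,
      ((1 : K) - i) * ψ ![E (i+1), E j, E k]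
    - ((1 : K) - j) * ψ ![E (j+1), E i, E k]
    + ((1 : K) - k) * ψ ![E (k+1), E i, E j] = 0 := by
    intro i j k
    have H := MgE i j k 1
    push_cast at H
    linear_combination H - ((j : K) - i) * h1 (i+j) k + ((k : K) - i) * h1 (i+k) j
      - ((k : K) - j) * h1 (j+k) i
  have grec : ∀ i : ℤ, ((1 : K) - i) * ψ ![E (i+1), E (-(i+1)), E 0]
      + ((2 : K) + i) * ψ ![E i, E (-i), E 0] = 0 := by
    intro i
    have H := R1 i (-1-i) 0
    rw [show (-1-i+1 : ℤ) = -i from by ring, show ((0:ℤ)+1) = 1 from by norm_num,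
      show (-1-i : ℤ) = -(i+1) from by ring] at H
    have hz := az 1 i (-(i+1)) (by omega)
    have hs := swap01 ψ (E i) (E (-i)) (E 0)
    push_cast at H
    linear_combination H + ((2 : K) + i) * hs - hz
  have gup : ∀ n : ℤ, 2 ≤ n → ψ ![E n, E (-n), E 0] = 0 := by
    refine fun n hn => Int.le_induction (motive := fun n _ => ψ ![E n, E (-n), E 0] = 0) ?_ ?_ n hn
    · show ψ ![E 2, E (-2), E 0] = 0
      rw [cyc ψ (E (-2)) (E 0) (E 2)]
      exact hG0
    · intro n hn ih
      show ψ ![E (n+1), E (-(n+1)), E 0] = 0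
      have H := grec n
      rw [ih] at H
      have hc0 : ((1 : K) - n) ≠ 0 := by
        have h' : (((1 - n : ℤ)) : K) ≠ 0 := Int.cast_ne_zero.mpr (by omega)
        intro h0; exact h' (by push_cast; linear_combination h0)
      have H' : ((1 : K) - n) * ψ ![E (n+1), E (-(n+1)), E 0] = 0 := by linear_combination H
      exact (mul_eq_zero.mp H').resolve_left hc0
  have gz : ∀ n : ℤ, ψ ![E n, E (-n), E 0] = 0 := by
    intro n
    rcases le_or_gt 2 n with hn | hn
    · exact gup n hn
    rcases le_or_gt n (-2) with hn' | hn'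
    · have hs := swap01 ψ (E (-n)) (E n) (E 0)
      have hu := gup (-n) (by omega)
      rw [neg_neg] at hu
      rw [hs, hu, neg_zero]
    · exact az n (-n) 0 (by omega)
  have hasZero : ∀ p q : ℤ, ψ ![E p, E q, E 0] = 0 := by
    intro p q
    by_cases h : q = -p
    · subst h; exact gz p
    · exact hdeg p q 0 (by omega)
  have anyZero : ∀ p q r : ℤ, (p = 0 ∨ q = 0 ∨ r = 0) → ψ ![E p, E q, E r] = 0 := by
    rintro p q r (rfl | rfl | rfl)
    · rw [cyc ψ (E q) (E r) (E 0)]; exact hasZero q r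
    · rw [swap12 ψ (E p) (E r) (E 0), hasZero p r, neg_zero]
    · exact hasZero p q
  have vstep : ∀ n : ℤ, 2 ≤ n → ψ ![E n, E (1-n), E (-1)] = 0 →
      ψ ![E (n+1), E (-n), E (-1)] = 0 := by
    intro n hn h0
    have H := MgE (-n) (-1) 1 n
    rw [show (-n + 1 : ℤ) = 1 - n from by ring, show (1 + n : ℤ) = n + 1 from by ring] at H
    have z1 := az (-n + -1) 1 n (by omega)
    have z3 := az (-n + n) (-1) 1 (by omega)
    have z5 := az (-1 + n) (-n) 1 (by omega)
    have z4 : ψ ![E 0, E (-n), E n] = 0 := anyZero 0 (-n) n (Or.inl rfl)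
    have s2 := cyc2 ψ (E n) (E (1-n)) (E (-1))
    push_cast at H
    have H' : ((n : K) - 1) * ψ ![E (n+1), E (-n), E (-1)] = 0 := by
      linear_combination H + ((1 : K) + n) * s2 + ((1 : K) + n) * h0
        - ((n : K) - 1) * z1 - (2 * (n : K)) * z3 + ((n : K) + 1) * z5 - (2 : K) * z4
    have hc0 : ((n : K) - 1) ≠ 0 := by
      have h' : (((n - 1 : ℤ)) : K) ≠ 0 := Int.cast_ne_zero.mpr (by omega)
      intro h0; exact h' (by push_cast; linear_combination h0)
    exact (mul_eq_zero.mp H').resolve_left hc0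
  have wz : ∀ n : ℤ, 2 ≤ n → ψ ![E n, E (1-n), E (-1)] = 0 := by
    refine fun n hn => Int.le_induction (motive := fun n _ => ψ ![E n, E (1-n), E (-1)] = 0) ?_ ?_ n hn
    · show ψ ![E 2, E (1-2), E (-1)] = 0
      rw [show (1-2 : ℤ) = -1 from by norm_num]
      exact rep12 ψ (E 2) (E (-1))
    · intro n hn ih
      show ψ ![E (n+1), E (1-(n+1)), E (-1)] = 0
      rw [show (1-(n+1) : ℤ) = -n from by ring]
      exact vstep n hn ih
  have hasNeg1 : ∀ p q : ℤ, ψ ![E p, E q, E (-1)] = 0 := by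
    intro p q
    by_cases h : q = 1 - p
    · subst h
      rcases le_or_gt 2 p with hp | hp
      · exact wz p hp
      rcases le_or_gt p (-1) with hp' | hp'
      · have hs := swap01 ψ (E (1-p)) (E p) (E (-1))
        have hu := wz (1-p) (by omega)
        rw [show (1-(1-p) : ℤ) = p from by ring] at hu
        rw [hs, hu, neg_zero]
      · exact az p (1-p) (-1) (by omega)
    · exact hdeg p q (-1) (by omega)
  have anyNeg1 : ∀ p q r : ℤ, (p = -1 ∨ q = -1 ∨ r = -1) → ψ ![E p, E q, E r] = 0 := by
    rintro p q r (rfl | rfl | rfl)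
    · rw [cyc ψ (E q) (E r) (E (-1))]; exact hasNeg1 q r
    · rw [swap12 ψ (E p) (E r) (E (-1)), hasNeg1 p r, neg_zero]
    · exact hasNeg1 p q
  have R1' : ∀ i j k : ℤ,
      ((1 : K) + i) * ψ ![E (i-1), E j, E k]
    - ((1 : K) + j) * ψ ![E (j-1), E i, E k]
    + ((1 : K) + k) * ψ ![E (k-1), E i, E j] = 0 := by
    intro i j k
    have H := MgE i j k (-1)
    rw [show (i + -1 : ℤ) = i - 1 from by ring, show (j + -1 : ℤ) = j - 1 from by ring,
      show (k + -1 : ℤ) = k - 1 from by ring] at H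
    have z1 := hasNeg1 (i+j) k
    have z2 := hasNeg1 (i+k) j
    have z3 := hasNeg1 (j+k) i
    push_cast at H
    linear_combination (-1 : K) * H + ((j : K) - i) * z1 - ((k : K) - i) * z2 + ((k : K) - j) * z3
  have sub1 : ∀ m x y : ℤ, m ≤ -3 → m + 2 ≤ x → x ≤ y →
      (∀ a b c : ℤ, m+1 ≤ a → m+1 ≤ b → m+1 ≤ c → ψ ![E a, E b, E c] = 0) →
      ψ ![E m, E x, E y] = 0 := by
    intro m x y hm hx hxy Z
    have H := R1' (m+1) x y
    rw [show (m+1-1 : ℤ) = m from by ring] at H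
    have z1 := Z (x-1) (m+1) y (by omega) (by omega) (by omega)
    have z2 := Z (y-1) (m+1) x (by omega) (by omega) (by omega)
    push_cast at H
    have H' : ((m : K) + 2) * ψ ![E m, E x, E y] = 0 := by
      linear_combination H + ((1 : K) + x) * z1 - ((1 : K) + y) * z2
    have hc0 : ((m : K) + 2) ≠ 0 := by
      have h' : (((m + 2 : ℤ)) : K) ≠ 0 := Int.cast_ne_zero.mpr (by omega)
      intro h0; exact h' (by push_cast; linear_combination h0)
    exact (mul_eq_zero.mp H').resolve_left hc0
  have sub2 : ∀ m : ℤ, m ≤ -3 →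
      (∀ a b c : ℤ, m+1 ≤ a → m+1 ≤ b → m+1 ≤ c → ψ ![E a, E b, E c] = 0) →
      ψ ![E m, E (m+1), E (-2*m-1)] = 0 := by
    intro m hm Z
    have H := R1 (-2*m-2) m (m+1)
    rw [show (-2*m-2+1 : ℤ) = -2*m-1 from by ring, show (m+1+1 : ℤ) = m+2 from by ring] at H
    have hrep := rep02 ψ (E (m+1)) (E (-2*m-2))
    have hs1 := cyc2 ψ (E m) (E (m+2)) (E (-2*m-2))
    have hz1 : ψ ![E m, E (m+2), E (-2*m-2)] = 0 :=
      sub1 m (m+2) (-2*m-2) hm (by omega) (by omega) Z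
    have hcy := cyc ψ (E m) (E (m+1)) (E (-2*m-1))
    push_cast at H
    have H' : (2*(m : K) + 3) * ψ ![E m, E (m+1), E (-2*m-1)] = 0 := by
      linear_combination H - (2*(m:K)+3) * hcy + ((1:K) - m) * hrep
        + ((m:K)) * hs1 + ((m:K)) * hz1
    have hc0 : (2*(m : K) + 3) ≠ 0 := by
      have h' : (((2*m + 3 : ℤ)) : K) ≠ 0 := Int.cast_ne_zero.mpr (by omega)
      intro h0; exact h' (by push_cast; linear_combination h0)
    exact (mul_eq_zero.mp H').resolve_left hc0
  have key : ∀ n : ℕ, ∀ p q r : ℤ, -(n:ℤ) ≤ p → -(n:ℤ) ≤ q → -(n:ℤ) ≤ r →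
      ψ ![E p, E q, E r] = 0 := by
    intro n
    induction n with
    | zero =>
      intro p q r hp hq hr
      exact az p q r (by omega)
    | succ n ih =>
      intro p q r hp hq hr
      by_cases hsum : p + q + r = 0
      swap
      · exact hdeg p q r hsum
      by_cases hsmall : (n:ℤ) + 1 ≤ 2
      · have hd : (p + q + r ≠ 0 ∨ p = 1 ∨ q = 1 ∨ r = 1 ∨ p = q ∨ p = r ∨ q = r)
            ∨ (p = 0 ∨ q = 0 ∨ r = 0) ∨ (p = -1 ∨ q = -1 ∨ r = -1) := by omega
        rcases hd with h | h | h
        · exact az p q r h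
        · exact anyZero p q r h
        · exact anyNeg1 p q r h
      · have hm : -((n:ℤ)+1) ≤ -3 := by omega
        have Z : ∀ a b c : ℤ, -((n:ℤ)+1)+1 ≤ a → -((n:ℤ)+1)+1 ≤ b → -((n:ℤ)+1)+1 ≤ c →
            ψ ![E a, E b, E c] = 0 := by
          intro a b c ha hb hc'
          exact ih a b c (by omega) (by omega) (by omega)
        have stepF : ∀ x y : ℤ, -((n:ℤ)+1) ≤ x → -((n:ℤ)+1) ≤ y →
            ψ ![E (-((n:ℤ)+1)), E x, E y] = 0 := by
          intro x y hx hy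
          by_cases hs : -((n:ℤ)+1) + x + y = 0
          swap
          · exact hdeg _ _ _ hs
          by_cases hrep : x = -((n:ℤ)+1) ∨ y = -((n:ℤ)+1) ∨ x = y
          · refine az _ x y ?_
            rcases hrep with h | h | h
            · exact Or.inr (Or.inr (Or.inr (Or.inr (Or.inl h.symm))))
            · exact Or.inr (Or.inr (Or.inr (Or.inr (Or.inr (Or.inl h.symm)))))
            · exact Or.inr (Or.inr (Or.inr (Or.inr (Or.inr (Or.inr h)))))
          push_neg at hrep
          obtain ⟨hxm, hym, hxy⟩ := hrep
          by_cases h1x : x = -((n:ℤ)+1) + 1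
          · subst h1x
            obtain rfl : y = -2*(-((n:ℤ)+1))-1 := by omega
            exact sub2 (-((n:ℤ)+1)) hm Z
          by_cases h1y : y = -((n:ℤ)+1) + 1
          · subst h1y
            rw [swap12 ψ (E (-((n:ℤ)+1))) (E (-((n:ℤ)+1)+1)) (E x)]
            obtain rfl : x = -2*(-((n:ℤ)+1))-1 := by omega
            rw [sub2 (-((n:ℤ)+1)) hm Z, neg_zero]
          · rcases le_total x y with hxy' | hxy'
            · exact sub1 (-((n:ℤ)+1)) x y hm (by omega) hxy' Z
            · rw [swap12 ψ (E (-((n:ℤ)+1))) (E y) (E x),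
                sub1 (-((n:ℤ)+1)) y x hm (by omega) hxy' Z, neg_zero]
        by_cases hP : p = -((n:ℤ)+1)
        · subst hP
          exact stepF q r hq hr
        by_cases hQ : q = -((n:ℤ)+1)
        · subst hQ
          rw [swap01 ψ (E (-((n:ℤ)+1))) (E p) (E r), stepF p r hp hr, neg_zero]
        by_cases hR : r = -((n:ℤ)+1)
        · subst hR
          rw [← cyc ψ (E p) (E q) (E (-((n:ℤ)+1)))]
          exact stepF p q hp hq
        · exact Z p q r (by omega) (by omega) (by omega)
  constructor
  · intro i j k
    exact key (i.natAbs + j.natAbs + k.natAbs) i j k (by omega) (by omega) (by omega)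
  · intro i j
    rw [hc i j, hX, mul_zero]
end

section
/- Let ψ be a 3-cocycle of the Virasoro algebra V with values in the trivial module K that is homogeneous of degree zero and satisfies ψ(ê_{−1}, ê_1, t) = 0. Then for all k ∈ ℤ, ψ(ê_k, ê_{−k}, t) = (1/6)(k − 1) k (k + 1) · ψ(ê_2, ê_{−2}, t). -/
section Aux
variable {K V : Type*} [Field K] [LieRing V] [LieAlgebra K V]

lemma alt3_first_zero (ψ : AlternatingMap K V K (Fin 3)) (u v : V) : ψ ![0, u, v] = 0 := by
  have h : ![(0:V), u, v] = Function.update ![(0:V), u, v] 0 0 := by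
    ext i; fin_cases i <;> simp
  rw [h]
  exact ψ.map_update_zero _ _

lemma alt3_first (ψ : AlternatingMap K V K (Fin 3)) (a b : K) (x y u v : V) :
    ψ ![a • x + b • y, u, v] = a * ψ ![x, u, v] + b * ψ ![y, u, v] := by
  have h : ∀ z : V, ![z, u, v] = Function.update ![x, u, v] 0 z := by
    intro z; ext i; fin_cases i <;> simp
  rw [h, ψ.map_update_add, ψ.map_update_smul, ψ.map_update_smul, ← h x, ← h y,
    smul_eq_mul, smul_eq_mul]

lemma alt3_swap01 (ψ : AlternatingMap K V K (Fin 3)) (x y z : V) :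
    ψ ![y, x, z] = -ψ ![x, y, z] := by
  have h : ![y, x, z] = ![x, y, z] ∘ Equiv.swap (0:Fin 3) 1 := by
    ext i; fin_cases i <;> simp [Equiv.swap_apply_def]
  rw [h, ψ.map_swap _ (by decide)]

lemma alt3_eq02 (ψ : AlternatingMap K V K (Fin 3)) (x y : V) : ψ ![x, y, x] = 0 :=
  ψ.map_eq_zero_of_eq _ (i := 0) (j := 2) (by simp) (by decide)

lemma alt3_eq01 (ψ : AlternatingMap K V K (Fin 3)) (x y : V) : ψ ![x, x, y] = 0 :=
  ψ.map_eq_zero_of_eq _ (i := 0) (j := 1) (by simp) (by decide)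

end Aux


/-- for a degree-zero 3-cocycle `ψ` of the Virasoro algebra with values in
the trivial module `K` satisfying `ψ(ê₋₁, ê₁, t) = 0`, the central coefficients satisfy
`ψ(ê k, ê₋ₖ, t) = (1/6)(k-1)k(k+1) ψ(ê 2, ê₋₂, t)`. -/
theorem virasoro_central_coefficients_recursion
    {K V : Type*} [Field K] [CharZero K] [LieRing V] [LieAlgebra K V]
    (E : ℤ → V) (t : V) (hV : IsVirasoroAlgebra K E t)
    (ψ : AlternatingMap K V K (Fin 3)) (hcoc : IsLieCocycle3 K ψ)
    (hdeg : ∀ i j k : ℤ, i + j + k ≠ 0 → ψ ![E i, E j, E k] = 0)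
    (hdegt : ∀ i j : ℤ, i + j ≠ 0 → ψ ![E i, E j, t] = 0)
    (h0 : ψ ![E (-1), E 1, t] = 0) :
    ∀ k : ℤ, ψ ![E k, E (-k), t] =
      (((k : K) - 1) * (k : K) * ((k : K) + 1) / 6) * ψ ![E 2, E (-2), t] := by
  obtain ⟨-, hbr, hbrt⟩ := hV
  have brE : ∀ n m p : ℤ, ψ ![⁅E n, E m⁆, E p, t] =
      ((m:K) - (n:K)) * ψ ![E (n+m), E p, t] := by
    intro n m p
    rw [hbr n m,
      show ((m - n : ℤ) • E (n+m) : V) = ((m:K) - (n:K)) • E (n+m) by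
        rw [← Int.cast_smul_eq_zsmul K]; norm_num,
      alt3_first, alt3_eq02]
    ring
  have key : ∀ n m p : ℤ, ((m:K) - n) * ψ ![E (n+m), E p, t]
      - ((p:K) - n) * ψ ![E (n+p), E m, t] + ((p:K) - m) * ψ ![E (m+p), E n, t] = 0 := by
    intro n m p
    have h := hcoc (E n) (E m) (E p) t
    rw [hbrt, hbrt, hbrt, alt3_first_zero, alt3_first_zero, alt3_first_zero,
      brE, brE, brE] at h
    linear_combination h
  have grec : ∀ k : ℤ, ((1:K) - k) * ψ ![E (k+1), E (-(k+1)), t]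
      = -((k:K) + 2) * ψ ![E k, E (-k), t] := by
    intro k
    have h := key k 1 (-(k+1))
    rw [show k + -(k+1) = -1 by ring, show (1:ℤ) + -(k+1) = -k by ring,
      alt3_swap01 ψ (E k) (E (-k)) t, h0] at h
    push_cast at h ⊢
    linear_combination h
  have hpos : ∀ n : ℕ, ψ ![E ((n:ℤ)+2), E (-((n:ℤ)+2)), t] =
      ((((n:K)+2) - 1) * ((n:K)+2) * (((n:K)+2) + 1) / 6) * ψ ![E 2, E (-2), t] := by
    intro n
    induction n with
    | zero => norm_num
    | succ n ih =>
      have h := grec ((n:ℤ) + 2)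
      rw [show ((n:ℤ)+2)+1 = ((n:ℤ)+1)+2 by ring] at h
      push_cast at h
      have hne : (1:K) - ((n:K) + 2) ≠ 0 := by
        have h1 : ((n+1 : ℕ):K) ≠ 0 := Nat.cast_ne_zero.mpr (Nat.succ_ne_zero n)
        push_cast at h1
        intro hc
        exact h1 (by linear_combination -hc)
      rw [show (((n+1 : ℕ)):ℤ) + 2 = ((n:ℤ)+1)+2 by push_cast; ring]
      apply mul_left_cancel₀ hne
      rw [h, ih]
      push_cast
      ring
  have hN : ∀ n : ℕ, ψ ![E (n:ℤ), E (-(n:ℤ)), t] =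
      ((((n:ℤ):K) - 1) * ((n:ℤ):K) * (((n:ℤ):K) + 1) / 6) * ψ ![E 2, E (-2), t] := by
    intro n
    match n with
    | 0 => simp [alt3_eq01]
    | 1 =>
      rw [show (((1:ℕ)):ℤ) = 1 by norm_num, alt3_swap01 ψ (E (-1)) (E 1) t, h0]
      norm_num
    | (n+2) =>
      have h := hpos n
      rw [show (((n+2 : ℕ)):ℤ) = (n:ℤ)+2 by push_cast; ring, h]
      push_cast
      ring
  intro k
  rcases le_or_gt 0 k with hk | hk
  · lift k to ℕ using hk with n
    have := hN n
    push_cast at this ⊢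
    exact this
  · have h1 := hN (-k).toNat
    rw [Int.toNat_of_nonneg (by omega), neg_neg] at h1
    rw [alt3_swap01 ψ (E (-k)) (E k) t, h1]
    push_cast
    ring
end

section
/- Let ψ be a 3-cocycle of the Witt algebra W with values in the trivial module K that is homogeneous of degree zero and satisfies ψ(e_i, e_j, e_1) = 0 for all i, j ∈ ℤ. Then for all k ∈ ℤ, ψ(e_{−k}, e_k, e_0) = (1/6)(k − 1) k (k + 1) · ψ(e_{−2}, e_2, e_0). -/
/-- for a degree-zero 3-cocycle `ψ` of the Witt algebra with values in the
trivial module `K` with `ψ(e i, e j, e 1) = 0` for all `i, j`, the level-zero coefficients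
satisfy `ψ(e₋ₖ, eₖ, e₀) = (1/6)(k-1)k(k+1) ψ(e₋₂, e₂, e₀)`. -/
theorem witt_cocycle_level_zero_recursion
    {K W : Type*} [Field K] [CharZero K] [LieRing W] [LieAlgebra K W]
    (e : ℤ → W) (hW : IsWittAlgebra K e)
    (ψ : AlternatingMap K W K (Fin 3)) (hcoc : IsLieCocycle3 K ψ)
    (hdeg : ∀ i j k : ℤ, i + j + k ≠ 0 → ψ ![e i, e j, e k] = 0)
    (h1 : ∀ i j : ℤ, ψ ![e i, e j, e 1] = 0) :
    ∀ k : ℤ, ψ ![e (-k), e k, e 0] =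
      (((k : K) - 1) * (k : K) * ((k : K) + 1) / 6) * ψ ![e (-2), e 2, e 0] := by
  obtain ⟨-, hb⟩ := hW
  -- pull integer scalars out of the first slot
  have hs0 : ∀ (z : ℤ) (x y w : W), ψ ![z • x, y, w] = (z : K) * ψ ![x, y, w] := by
    intro z x y w
    rw [show (z : ℤ) • x = ((z : K)) • x from (Int.cast_smul_eq_zsmul K z x).symm]
    have h := ψ.map_update_smul ![x, y, w] 0 ((z : K)) x
    rw [show Function.update ![x, y, w] 0 (((z : K)) • x) = ![((z : K)) • x, y, w] by
        funext i; fin_cases i <;> simp,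
      show Function.update ![x, y, w] 0 x = ![x, y, w] by
        funext i; fin_cases i <;> simp] at h
    rw [h, smul_eq_mul]
  have hswap01 : ∀ x y w : W, ψ ![x, y, w] = -ψ ![y, x, w] := by
    intro x y w
    have h := ψ.map_swap ![y, x, w] (by decide : (0 : Fin 3) ≠ 1)
    rw [show (![y, x, w] ∘ Equiv.swap (0 : Fin 3) 1) = ![x, y, w] by
      funext i; fin_cases i <;> simp [Equiv.swap_apply_def]] at h
    exact h
  have hswap12 : ∀ x y w : W, ψ ![x, y, w] = -ψ ![x, w, y] := by
    intro x y w
    have h := ψ.map_swap ![x, w, y] (by decide : (1 : Fin 3) ≠ 2)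
    rw [show (![x, w, y] ∘ Equiv.swap (1 : Fin 3) 2) = ![x, y, w] by
      funext i; fin_cases i <;> simp [Equiv.swap_apply_def]] at h
    exact h
  -- ψ(e₋₁, e₁, e₀) = 0
  have hf1 : ψ ![e (-1), e 1, e 0] = 0 := by
    rw [hswap12, h1, neg_zero]
  -- the recursion: (k-2) f(k) = (k+1) f(k-1)
  have hrec : ∀ k : ℤ, ((k : K) - 2) * ψ ![e (-k), e k, e 0]
      = ((k : K) + 1) * ψ ![e (-(k - 1)), e (k - 1), e 0] := by
    intro k
    have H := hcoc (e (-k)) (e (k - 1)) (e 1) (e 0)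
    rw [hb, hb, hb, hb, hb, hb] at H
    rw [show -k + (k - 1) = -1 by ring, show -k + 1 = -(k - 1) by ring,
      show -k + 0 = -k by ring, show k - 1 + 1 = k by ring,
      show k - 1 + 0 = k - 1 by ring, show (1 : ℤ) + 0 = 1 by ring] at H
    rw [hs0, hs0, hs0, hs0, hs0, hs0] at H
    rw [hf1, h1, h1] at H
    have h6 : ψ ![e 1, e (-k), e (k - 1)] = 0 := by
      rw [hswap01, hswap12, h1]; ring
    rw [h6] at H
    rw [hswap01 (e k) (e (-k)) (e 0)] at H
    push_cast at H
    linear_combination H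
  set c := ψ ![e (-2), e 2, e 0] with hc
  have key : ∀ n : ℕ, ψ ![e (-(n : ℤ)), e (n : ℤ), e 0]
      = (((n : K) - 1) * (n : K) * ((n : K) + 1) / 6) * c := by
    intro n
    induction n with
    | zero =>
      simp only [Nat.cast_zero, neg_zero]
      rw [ψ.map_eq_zero_of_eq ![e 0, e 0, e 0] (i := 0) (j := 1) (by simp) (by decide)]
      norm_num
    | succ n ih =>
      match n, ih with
      | 0, _ =>
        simpa using hf1
      | 1, _ =>
        norm_num
        exact hc.symm
      | (m + 2), ih =>
        have hr := hrec ((m : ℤ) + 3)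
        rw [show ((m : ℤ) + 3) - 1 = ((m : ℤ) + 2) by ring] at hr
        have hcast : ((m : ℤ) + 2 : ℤ) = ((m + 2 : ℕ) : ℤ) := by push_cast; ring
        have hcast3 : ((m : ℤ) + 3 : ℤ) = ((m + 2 + 1 : ℕ) : ℤ) := by push_cast; ring
        rw [hcast3] at hr
        rw [hcast] at hr
        rw [ih] at hr
        set A := ψ ![e (-((m + 2 + 1 : ℕ) : ℤ)), e ((m + 2 + 1 : ℕ) : ℤ), e 0] with hA
        have hne : ((m : K) + 1) ≠ 0 := by
          have := Nat.cast_ne_zero (R := K).mpr (Nat.succ_ne_zero m)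
          push_cast at this
          exact this
        push_cast at hr ⊢
        apply mul_left_cancel₀ hne
        field_simp at hr ⊢
        apply mul_left_cancel₀ hne
        linear_combination hr
  intro k
  rcases le_or_gt 0 k with hk | hk
  · obtain ⟨n, rfl⟩ := Int.eq_ofNat_of_zero_le hk
    rw [key n]; push_cast; ring
  · have h2 : (0 : ℤ) ≤ -k := by omega
    obtain ⟨n, hn⟩ := Int.eq_ofNat_of_zero_le h2
    have hkn : k = -(n : ℤ) := by omega
    subst hkn
    rw [neg_neg, hswap01, key n]
    push_cast
    ring
end
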